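/- arXiv:0905.0463 — 8 statements merged into one kernel-verified Lean document; each statement's English description precedes it below -/
import Mathlib

section
/- If (γ_n) is a nonincreasing sequence in (0,1) with Γ_n := Σ_{k=1}^n γ_k → ∞, and γ_n = O(Γ_n e^{-θ Γ_n}) for some θ > 0, then limsup_{n→∞} γ_n n / log n ≤ 1/θ. -/
open Filter Finset Topology

theorem stmt_0 (γ : ℕ → ℝ) (Γ : ℕ → ℝ)
    (hΓ : ∀ n, Γ n = ∑ k ∈ Finset.Icc 1 n, γ k)
    (hpos : ∀ n, 1 ≤ n → 0 < γ n) (hlt : ∀ n, 1 ≤ n → γ n < 1)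
    (hmono : ∀ n, 1 ≤ n → γ (n + 1) ≤ γ n)
    (htend : Tendsto Γ atTop atTop)
    (θ : ℝ) (hθ : 0 < θ)
    (C : ℝ) (hC : 0 < C) (hO : ∀ n, 1 ≤ n → γ n ≤ C * Γ n * Real.exp (-θ * Γ n)) :
    Filter.limsup (fun n : ℕ => γ n * n / Real.log n) atTop ≤ 1 / θ := by
  have hΓ0 : Γ 0 = 0 := by simp [hΓ]
  have hΓsucc : ∀ n, Γ (n+1) = Γ n + γ (n+1) := by
    intro n
    rw [hΓ, hΓ, Finset.sum_Icc_succ_top (by omega)]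
  have hΓmono : Monotone Γ := monotone_nat_of_le_succ (fun n => by
    rw [hΓsucc]; linarith [hpos (n+1) (by omega)])
  have hΓnonneg : ∀ n, 0 ≤ Γ n := fun n => hΓ0 ▸ hΓmono (Nat.zero_le n)
  have hΓle : ∀ n, Γ n ≤ n := by
    intro n; induction n with
    | zero => simp [hΓ0]
    | succ n ih =>
      rw [hΓsucc]; push_cast; linarith [hlt (n+1) (by omega)]
  have hanti : ∀ k n, 1 ≤ k → k ≤ n → γ n ≤ γ k := by
    intro k n hk hkn
    induction n with
    | zero => omega
    | succ n ih =>
      rcases Nat.lt_or_ge k (n+1) with h | h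
      · exact le_trans (hmono n (by omega)) (ih (by omega))
      · have : k = n+1 := by omega
        simp [this]
  have hnγ : ∀ n : ℕ, (n : ℝ) * γ n ≤ Γ n := by
    intro n
    rcases Nat.eq_zero_or_pos n with rfl | hn
    · simp [hΓ0]
    · rw [hΓ]
      have := Finset.card_nsmul_le_sum (Finset.Icc 1 n) γ (γ n)
        (fun k hk => hanti k n (Finset.mem_Icc.mp hk).1 (Finset.mem_Icc.mp hk).2)
      simpa [Nat.card_Icc, nsmul_eq_mul] using this
  -- key exponential bound
  have hexp : ∀ n, Real.exp (θ * Γ n) ≤ 1 + θ * C * n * Γ n := by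
    intro n
    induction n with
    | zero => simp [hΓ0]
    | succ n ih =>
      have h2 : (0:ℝ) < Real.exp (θ * Γ (n+1)) := Real.exp_pos _
      have hstep : Real.exp (θ * Γ (n+1)) ≤
          Real.exp (θ * Γ n) + θ * γ (n+1) * Real.exp (θ * Γ (n+1)) := by
        have h1 := Real.add_one_le_exp (θ * Γ n - θ * Γ (n+1))
        have h3 : Real.exp (θ * Γ n - θ * Γ (n+1)) * Real.exp (θ * Γ (n+1))
            = Real.exp (θ * Γ n) := by
          rw [← Real.exp_add]; ring_nf
        have h4 := hΓsucc n
        have h5 := mul_le_mul_of_nonneg_right h1 h2.le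
        rw [h3] at h5
        have h6 : (θ * Γ n - θ * Γ (n+1) + 1) * Real.exp (θ * Γ (n+1))
            = Real.exp (θ * Γ (n+1)) - θ * γ (n+1) * Real.exp (θ * Γ (n+1)) := by
          rw [h4]; ring
        rw [h6] at h5
        linarith
      have hOe : θ * γ (n+1) * Real.exp (θ * Γ (n+1)) ≤ θ * C * Γ (n+1) := by
        have h := hO (n+1) (by omega)
        have he : Real.exp (-θ * Γ (n+1)) * Real.exp (θ * Γ (n+1)) = 1 := by
          rw [← Real.exp_add]; ring_nf; exact Real.exp_zero
        have h7 : γ (n+1) * Real.exp (θ * Γ (n+1)) ≤ C * Γ (n+1) := by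
          have h8 := mul_le_mul_of_nonneg_right h h2.le
          rwa [mul_assoc (C * Γ (n+1)), he, mul_one] at h8
        calc θ * γ (n+1) * Real.exp (θ * Γ (n+1)) = θ * (γ (n+1) * Real.exp (θ * Γ (n+1))) := by ring
          _ ≤ θ * (C * Γ (n+1)) := mul_le_mul_of_nonneg_left h7 hθ.le
          _ = θ * C * Γ (n+1) := by ring
      have hmonoΓ : Γ n ≤ Γ (n+1) := hΓmono (Nat.le_succ n)
      have hΓ1 : 0 ≤ Γ (n+1) := hΓnonneg (n+1)
      have h9 : θ * C * (n:ℝ) * Γ n ≤ θ * C * (n:ℝ) * Γ (n+1) :=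
        mul_le_mul_of_nonneg_left hmonoΓ (by positivity)
      push_cast
      nlinarith [h9]
  have hlogΓ : ∀ n, θ * Γ n ≤ Real.log (1 + θ * C * n * Γ n) := by
    intro n
    have h0 : (0:ℝ) ≤ θ * C * n * Γ n := mul_nonneg (by positivity) (hΓnonneg n)
    calc θ * Γ n = Real.log (Real.exp (θ * Γ n)) := (Real.log_exp _).symm
      _ ≤ Real.log (1 + θ * C * n * Γ n) := Real.log_le_log (Real.exp_pos _) (hexp n)
  set L : ℕ → ℝ := fun n => Real.log (1 + θ * C * (n:ℝ)^2) with hL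
  have hLnonneg : ∀ n : ℕ, 0 ≤ L n := by
    intro n
    apply Real.log_nonneg
    nlinarith [sq_nonneg (n:ℝ), mul_pos hθ hC]
  have hΓL : ∀ n, θ * Γ n ≤ L n := by
    intro n
    have h0 : (0:ℝ) ≤ θ * C * n * Γ n := mul_nonneg (by positivity) (hΓnonneg n)
    refine (hlogΓ n).trans (Real.log_le_log (by linarith) ?_)
    have h1 : Γ n ≤ n := hΓle n
    have h2 : (0:ℝ) ≤ θ * C * n := by positivity
    nlinarith [Nat.cast_nonneg (α := ℝ) n]
  -- second iteration
  have hΓ2 : ∀ n, θ * Γ n ≤ Real.log (1 + C * n * L n) := by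
    intro n
    have h0 : (0:ℝ) ≤ θ * C * n * Γ n := mul_nonneg (by positivity) (hΓnonneg n)
    refine (hlogΓ n).trans (Real.log_le_log (by linarith) ?_)
    have h1 : θ * Γ n ≤ L n := hΓL n
    have h2 : (0:ℝ) ≤ C * n := by positivity
    nlinarith [Nat.cast_nonneg (α := ℝ) n]
  set M : ℕ → ℝ := fun n => Real.log (1 + C * L n) with hM
  have hMnonneg : ∀ n : ℕ, 0 ≤ M n := fun n =>
    Real.log_nonneg (by nlinarith [hLnonneg n])
  have hΓ3 : ∀ n : ℕ, 1 ≤ n → θ * Γ n ≤ Real.log n + M n := by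
    intro n hn
    have hn1 : (1:ℝ) ≤ (n:ℝ) := by exact_mod_cast hn
    have key : 1 + C * n * L n ≤ n * (1 + C * L n) := by
      nlinarith [hLnonneg n, mul_nonneg hC.le (hLnonneg n)]
    have h0 : (0:ℝ) ≤ C * n * L n := mul_nonneg (by positivity) (hLnonneg n)
    have := (hΓ2 n).trans (Real.log_le_log (by linarith) key)
    rwa [Real.log_mul (by linarith) (by nlinarith [mul_nonneg hC.le (hLnonneg n)])] at this
  -- tendsto of the error term
  have hu : Tendsto (fun n : ℕ => 1 + C * L n) atTop atTop := by
    apply tendsto_atTop_add_const_left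
    apply Tendsto.const_mul_atTop hC
    apply Real.tendsto_log_atTop.comp
    apply tendsto_atTop_add_const_left
    apply Tendsto.const_mul_atTop (by positivity)
    exact (tendsto_pow_atTop (by norm_num)).comp tendsto_natCast_atTop_atTop
  have hlog1 : ∀ᶠ n : ℕ in atTop, 1 ≤ Real.log n := by
    filter_upwards [eventually_ge_atTop 3] with n hn
    have hn3 : (3:ℝ) ≤ (n:ℝ) := by exact_mod_cast hn
    rw [Real.le_log_iff_exp_le (by linarith)]
    calc Real.exp 1 ≤ 2.7182818286 := Real.exp_one_lt_d9.le
      _ ≤ (n:ℝ) := by linarith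
  have huO : (fun n : ℕ => 1 + C * L n) =O[atTop] (fun n : ℕ => θ * Real.log n) := by
    rw [Asymptotics.isBigO_iff]
    refine ⟨(1 + C * Real.log (1 + θ*C) + 2*C)/θ, ?_⟩
    filter_upwards [eventually_ge_atTop 3, hlog1] with n hn hlogn
    have hn1 : (1:ℝ) ≤ (n:ℝ) := by exact_mod_cast (by omega : 1 ≤ n)
    have hLb : L n ≤ Real.log (1 + θ*C) + 2 * Real.log n := by
      have h1 : 1 + θ * C * (n:ℝ)^2 ≤ (1 + θ*C) * (n:ℝ)^2 := by nlinarith [mul_pos hθ hC]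
      have := Real.log_le_log (by positivity) h1
      rwa [Real.log_mul (by positivity) (by positivity), Real.log_pow,
        Nat.cast_ofNat] at this
    have hl0 : Real.log (1 + θ*C) ≥ 0 := Real.log_nonneg (by nlinarith [mul_pos hθ hC])
    have hub : 1 + C * L n ≤ (1 + C * Real.log (1 + θ*C) + 2*C) * Real.log n := by
      nlinarith [mul_nonneg hC.le hl0]
    rw [Real.norm_eq_abs, Real.norm_eq_abs,
      abs_of_nonneg (by nlinarith [hLnonneg n, mul_nonneg hC.le (hLnonneg n)] : (0:ℝ) ≤ 1 + C * L n),
      abs_of_nonneg (by positivity : (0:ℝ) ≤ θ * Real.log n)]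
    rw [div_mul_eq_mul_div, le_div_iff₀ hθ]
    nlinarith
  have hnum : (fun n : ℕ => M n) =o[atTop] (fun n : ℕ => θ * Real.log n) := by
    have h1 := Real.isLittleO_log_id_atTop.comp_tendsto hu
    exact h1.trans_isBigO huO
  have hg0 : Tendsto (fun n : ℕ => M n / (θ * Real.log n)) atTop (𝓝 0) :=
    hnum.tendsto_div_nhds_zero
  have hh : Tendsto (fun n : ℕ => 1/θ + M n / (θ * Real.log n)) atTop (𝓝 (1/θ)) := by
    simpa using tendsto_const_nhds.add hg0
  have hev : ∀ᶠ n : ℕ in atTop, γ n * n / Real.log n ≤ 1/θ + M n / (θ * Real.log n) := by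
    filter_upwards [eventually_ge_atTop 2] with n hn
    have hn1 : (1:ℝ) < (n:ℝ) := by exact_mod_cast (by omega : 1 < n)
    have hlogpos : 0 < Real.log n := Real.log_pos hn1
    have h1 : γ n * n / Real.log n ≤ Γ n / Real.log n := by
      apply div_le_div_of_nonneg_right (by linarith [hnγ n]) hlogpos.le
    refine h1.trans ?_
    have h2 := hΓ3 n (by omega)
    rw [div_le_iff₀ hlogpos]
    have : (1/θ + M n / (θ * Real.log n)) * Real.log n = (Real.log n + M n) / θ := by
      field_simp
    rw [this, le_div_iff₀ hθ]
    nlinarith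
  have hev0 : ∀ᶠ n : ℕ in atTop, (0:ℝ) ≤ γ n * n / Real.log n := by
    filter_upwards [eventually_ge_atTop 2] with n hn
    have hn1 : (1:ℝ) < (n:ℝ) := by exact_mod_cast (by omega : 1 < n)
    have hg := hpos n (by omega)
    exact div_nonneg (mul_nonneg hg.le (Nat.cast_nonneg n)) (Real.log_pos hn1).le
  calc Filter.limsup (fun n : ℕ => γ n * n / Real.log n) atTop
      ≤ Filter.limsup (fun n : ℕ => 1/θ + M n / (θ * Real.log n)) atTop := by
        exact limsup_le_limsup hev (isCoboundedUnder_le_of_eventually_le atTop hev0)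
          hh.isBoundedUnder_le
    _ = 1/θ := hh.limsup_eq
end

section
/- If (γ_n) is a nonincreasing sequence in (0,1) with Γ_n := Σ_{k=1}^n γ_k → ∞, and γ_n = O(Γ_n e^{-θ Γ_n}) for some θ > 0, then limsup_{n→∞} Γ_n / log n ≤ 1/θ. -/
open Filter Finset

theorem stmt_1 (γ : ℕ → ℝ) (Γ : ℕ → ℝ)
    (hΓ : ∀ n, Γ n = ∑ k ∈ Finset.Icc 1 n, γ k)
    (hpos : ∀ n, 1 ≤ n → 0 < γ n) (hlt : ∀ n, 1 ≤ n → γ n < 1)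
    (hmono : ∀ n, 1 ≤ n → γ (n + 1) ≤ γ n)
    (htend : Tendsto Γ atTop atTop)
    (θ : ℝ) (hθ : 0 < θ)
    (C : ℝ) (hC : 0 < C) (hO : ∀ n, 1 ≤ n → γ n ≤ C * Γ n * Real.exp (-θ * Γ n)) :
    Filter.limsup (fun n : ℕ => Γ n / Real.log n) atTop ≤ 1 / θ := by
  have hΓ0 : Γ 0 = 0 := by simp [hΓ]
  have hstep : ∀ n : ℕ, Γ (n + 1) = Γ n + γ (n + 1) := by
    intro n
    rw [hΓ, hΓ, Finset.sum_Icc_succ_top (by omega : 1 ≤ n + 1)]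
  have hΓmono : Monotone Γ := by
    apply monotone_nat_of_le_succ
    intro n
    have := hpos (n + 1) (by omega)
    rw [hstep]; linarith
  have hΓ1 : Γ 1 = γ 1 := by rw [hstep 0, hΓ0]; ring
  have hΓ1pos : 0 < Γ 1 := by rw [hΓ1]; exact hpos 1 le_rfl
  have hΓpos : ∀ n : ℕ, 1 ≤ n → 0 < Γ n := fun n hn => lt_of_lt_of_le hΓ1pos (hΓmono hn)
  -- key inequality: exp (θ Γ n) ≤ 1 + θ C n Γ n
  have key : ∀ n : ℕ, Real.exp (θ * Γ n) ≤ 1 + θ * C * n * Γ n := by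
    intro n
    induction n with
    | zero => simp [hΓ0]
    | succ n ih =>
      have h1 := hstep n
      have hγp := hpos (n + 1) (by omega)
      have hmn : Γ n ≤ Γ (n + 1) := by rw [h1]; linarith
      have hexp1 : Real.exp (θ * Γ (n + 1)) - Real.exp (θ * Γ n)
          ≤ θ * γ (n + 1) * Real.exp (θ * Γ (n + 1)) := by
        have h2 : θ * Γ n - θ * Γ (n + 1) + 1 ≤ Real.exp (θ * Γ n - θ * Γ (n + 1)) :=
          Real.add_one_le_exp _
        have h3 : Real.exp (θ * Γ n - θ * Γ (n + 1)) * Real.exp (θ * Γ (n + 1))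
            = Real.exp (θ * Γ n) := by rw [← Real.exp_add]; ring_nf
        have h4 := Real.exp_pos (θ * Γ (n + 1))
        have h5 : θ * Γ (n + 1) - θ * Γ n = θ * γ (n + 1) := by rw [h1]; ring
        nlinarith
      have hexp2 : θ * γ (n + 1) * Real.exp (θ * Γ (n + 1)) ≤ θ * C * Γ (n + 1) := by
        have h6 := hO (n + 1) (by omega)
        have h7 : Real.exp (-θ * Γ (n + 1)) * Real.exp (θ * Γ (n + 1)) = 1 := by
          rw [← Real.exp_add]; ring_nf; exact Real.exp_zero
        have h4 := Real.exp_pos (θ * Γ (n + 1))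
        have h8 : γ (n + 1) * Real.exp (θ * Γ (n + 1)) ≤ C * Γ (n + 1) := by
          calc γ (n + 1) * Real.exp (θ * Γ (n + 1))
              ≤ C * Γ (n + 1) * Real.exp (-θ * Γ (n + 1)) * Real.exp (θ * Γ (n + 1)) :=
                mul_le_mul_of_nonneg_right h6 h4.le
          _ = C * Γ (n + 1) * (Real.exp (-θ * Γ (n + 1)) * Real.exp (θ * Γ (n + 1))) := by ring
          _ = C * Γ (n + 1) := by rw [h7, mul_one]
        nlinarith [mul_le_mul_of_nonneg_left h8 hθ.le]
      have hΓnn : 0 ≤ Γ n := by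
        cases n with
        | zero => simp [hΓ0]
        | succ m => exact (hΓpos (m + 1) (by omega)).le
      have : Real.exp (θ * Γ (n + 1)) ≤ 1 + θ * C * n * Γ n + θ * C * Γ (n + 1) := by
        linarith
      have h9 : θ * C * (n:ℝ) * Γ n ≤ θ * C * (n:ℝ) * Γ (n + 1) :=
        mul_le_mul_of_nonneg_left hmn (by positivity)
      push_cast
      nlinarith
  set D : ℝ := 1 / Γ 1 + θ * C with hD
  have hDpos : 0 < D := by positivity
  -- log bound for n ≥ 1
  have hlog : ∀ n : ℕ, 1 ≤ n →
      θ * Γ n ≤ Real.log D + Real.log n + Real.log (Γ n) := by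
    intro n hn
    have hΓn := hΓpos n hn
    have hn1 : (1 : ℝ) ≤ (n : ℝ) := by exact_mod_cast hn
    have h1 : (1 : ℝ) ≤ 1 / Γ 1 * n * Γ n := by
      have : Γ 1 ≤ (n : ℝ) * Γ n := by nlinarith [hΓmono hn]
      rw [div_mul_eq_mul_div, div_mul_eq_mul_div, le_div_iff₀ hΓ1pos]
      linarith
    have h2 : Real.exp (θ * Γ n) ≤ D * n * Γ n := by
      have := key n
      have : 1 + θ * C * n * Γ n ≤ D * n * Γ n := by rw [hD]; nlinarith
      linarith [key n]
    have hDn : (0:ℝ) < D * n * Γ n := by positivity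
    have h3 : θ * Γ n ≤ Real.log (D * n * Γ n) :=
      (Real.le_log_iff_exp_le hDn).mpr h2
    have h4 : Real.log (D * n * Γ n) = Real.log D + Real.log n + Real.log (Γ n) := by
      rw [Real.log_mul (by positivity) (ne_of_gt hΓn),
        Real.log_mul (ne_of_gt hDpos) (by positivity)]
    linarith [h3, h4.le]
  -- nonnegativity and coboundedness
  have hnonneg : ∀ n : ℕ, 0 ≤ Γ n / Real.log n := by
    intro n
    cases n with
    | zero => simp [hΓ0]
    | succ m =>
      apply div_nonneg (hΓpos (m + 1) (by omega)).le
      apply Real.log_nonneg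
      exact_mod_cast Nat.one_le_iff_ne_zero.mpr (by omega)
  -- tendsto : log Γ n / Γ n → 0
  have hlt0 : Tendsto (fun n : ℕ => Real.log (Γ n) / Γ n) atTop (nhds 0) :=
    (Real.isLittleO_log_id_atTop.comp_tendsto htend).tendsto_div_nhds_zero
  have hlogn : Tendsto (fun n : ℕ => Real.log n) atTop atTop :=
    Real.tendsto_log_atTop.comp tendsto_natCast_atTop_atTop
  refine le_of_forall_pos_le_add ?_
  intro ε hε
  set c : ℝ := 1 / θ + ε with hc
  have hcpos : 0 < c := by positivity
  have hθc : θ * c = 1 + θ * ε := by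
    rw [hc, mul_add, mul_one_div_cancel hθ.ne']
  have hicθ : 1 / c < θ := by
    rw [div_lt_iff₀ hcpos]
    nlinarith [mul_pos hθ hε]
  set θ' : ℝ := (θ + 1 / c) / 2 with hθ'
  have hθ'pos : 0 < θ' := by
    have : 0 < 1 / c := by positivity
    rw [hθ']; linarith
  have hθ'lt : θ' < θ := by rw [hθ']; linarith
  have hcθ' : 1 < c * θ' := by
    have h1 : 1 / c < θ' := by rw [hθ']; linarith
    calc (1:ℝ) = c * (1 / c) := by field_simp
    _ < c * θ' := mul_lt_mul_of_pos_left h1 hcpos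
  have hev1 : ∀ᶠ n : ℕ in atTop, Real.log (Γ n) ≤ (θ - θ') * Γ n := by
    have hη : 0 < θ - θ' := by linarith
    filter_upwards [hlt0.eventually (eventually_lt_nhds hη),
      eventually_ge_atTop 1] with n h1 h2
    have hΓn := hΓpos n h2
    calc Real.log (Γ n) = Real.log (Γ n) / Γ n * Γ n := by field_simp
    _ ≤ (θ - θ') * Γ n := by nlinarith
  have hev2 : ∀ᶠ n : ℕ in atTop,
      Real.log D ≤ (c * θ' - 1) * Real.log n ∧ 0 < Real.log n := by
    have h : Tendsto (fun n : ℕ => (c * θ' - 1) * Real.log n) atTop atTop :=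
      hlogn.const_mul_atTop (by linarith)
    filter_upwards [h.eventually_ge_atTop (Real.log D),
      hlogn.eventually_gt_atTop 0] with n h1 h2
    exact ⟨h1, h2⟩
  have hev : ∀ᶠ n : ℕ in atTop, Γ n / Real.log n ≤ c := by
    filter_upwards [hev1, hev2, eventually_ge_atTop 1] with n h1 hh h4
    obtain ⟨h2, h3⟩ := hh
    have h5 := hlog n h4
    have h6 : θ' * Γ n ≤ Real.log D + Real.log n := by linarith
    have h7 : θ' * Γ n ≤ c * θ' * Real.log n := by linarith
    have hΓn := hΓpos n h4
    rw [div_le_iff₀ h3]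
    nlinarith
  exact Filter.limsup_le_of_le (isCoboundedUnder_le_of_le atTop hnonneg) hev
end

section
/- If (γ_n) is a sequence in (0,1) satisfying γ_n = O(Γ_n e^{-θ Γ_n}) for some θ > 0, where Γ_n = Σ_{k=1}^n γ_k, then Σ_{n=1}^∞ γ_n^2 < ∞. -/
open Filter Finset

theorem stmt_2 (γ : ℕ → ℝ) (Γ : ℕ → ℝ)
    (hΓ : ∀ n, Γ n = ∑ k ∈ Finset.Icc 1 n, γ k)
    (hpos : ∀ n, 1 ≤ n → 0 < γ n) (hlt : ∀ n, 1 ≤ n → γ n < 1)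
    (θ : ℝ) (hθ : 0 < θ)
    (C : ℝ) (hC : 0 < C) (hO : ∀ n, 1 ≤ n → γ n ≤ C * Γ n * Real.exp (-θ * Γ n)) :
    Summable (fun n : ℕ => (γ (n + 1)) ^ 2) := by
  set c := θ / 2 with hc
  have hc0 : 0 < c := by positivity
  set f : ℕ → ℝ := fun n => Real.exp (-c * Γ n) with hf
  have hΓ0 : Γ 0 = 0 := by simp [hΓ]
  have hΓsucc : ∀ n : ℕ, Γ (n + 1) = Γ n + γ (n + 1) := by
    intro n
    rw [hΓ, hΓ n, Finset.sum_Icc_succ_top (Nat.succ_le_succ (Nat.zero_le n))]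
  have hΓnonneg : ∀ n, 0 ≤ Γ n := by
    intro n
    induction n with
    | zero => simp [hΓ0]
    | succ k ih =>
      have := hpos (k + 1) (Nat.succ_le_succ (Nat.zero_le k))
      rw [hΓsucc]; linarith
  have key : ∀ n : ℕ, γ (n + 1) ^ 2 ≤ (C / c ^ 2) * (f n - f (n + 1)) := by
    intro n
    have hg : 0 < γ (n + 1) := hpos _ (Nat.succ_le_succ (Nat.zero_le n))
    have hG := hΓsucc n
    have hGn := hΓnonneg n
    have hGn1 := hΓnonneg (n + 1)
    have hOb := hO (n + 1) (Nat.succ_le_succ (Nat.zero_le n))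
    set G := Γ (n + 1) with hGdef
    set E : ℝ := Real.exp (-c * G) with hE
    have hE0 : 0 < E := Real.exp_pos _
    have hfE : f (n + 1) = E := rfl
    have hEsq : Real.exp (-θ * G) = E * E := by
      rw [hE, ← Real.exp_add]; ring_nf; rw [hc]; ring_nf
    have hEinv : E * Real.exp (c * G) = 1 := by
      rw [hE, ← Real.exp_add]; ring_nf; exact Real.exp_zero
    -- bound1 : G * E ≤ 1 / c
    have hexp1 : c * G ≤ Real.exp (c * G) := by
      have := Real.add_one_le_exp (c * G); linarith
    have hbound1 : G * E ≤ 1 / c := by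
      rw [le_div_iff₀ hc0]
      nlinarith [Real.exp_pos (c * G)]
    -- bound2 : γ (n+1) * E ≤ (1/c) * (f n - E)
    have hfn : f n = E * Real.exp (c * γ (n + 1)) := by
      simp only [hf, hE, ← Real.exp_add]
      congr 1
      rw [hG]; ring
    have hexp2 : c * γ (n + 1) + 1 ≤ Real.exp (c * γ (n + 1)) :=
      Real.add_one_le_exp _
    have hbound2 : γ (n + 1) * E ≤ (1 / c) * (f n - E) := by
      rw [hfn, one_div, inv_mul_eq_div, le_div_iff₀ hc0]
      nlinarith
    have s1 : γ (n + 1) ^ 2 ≤ C * (G * E) * (γ (n + 1) * E) := by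
      have h := mul_le_mul_of_nonneg_left hOb hg.le
      rw [hEsq] at h
      nlinarith [h]
    have s2 : C * (G * E) * (γ (n + 1) * E) ≤ C * (1 / c) * (γ (n + 1) * E) :=
      mul_le_mul_of_nonneg_right
        (mul_le_mul_of_nonneg_left hbound1 hC.le) (by positivity)
    have s3 : C * (1 / c) * (γ (n + 1) * E) ≤ C * (1 / c) * ((1 / c) * (f n - E)) :=
      mul_le_mul_of_nonneg_left hbound2 (by positivity)
    have hfinal : C * (1 / c) * ((1 / c) * (f n - E)) = (C / c ^ 2) * (f n - f (n + 1)) := by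
      rw [hfE]; ring
    linarith
  apply summable_of_sum_range_le (c := C / c ^ 2) (fun n => sq_nonneg _)
  intro n
  calc ∑ i ∈ Finset.range n, γ (i + 1) ^ 2
      ≤ ∑ i ∈ Finset.range n, (C / c ^ 2) * (f i - f (i + 1)) :=
        Finset.sum_le_sum fun i _ => key i
    _ = (C / c ^ 2) * (f 0 - f n) := by
        rw [← Finset.mul_sum, Finset.sum_range_sub' f n]
    _ ≤ C / c ^ 2 := by
        have h0 : f 0 = 1 := by simp [hf, hΓ0]
        have hn : 0 < f n := Real.exp_pos _
        rw [h0]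
        nlinarith [div_pos hC (pow_pos hc0 2)]
end

section
/- Let f(x) = x(1-x). If (X_n) is a sequence in [0,1] such that for each n, X_{n+1} equals X_n, or X_n + γ_{n+1}(1-X_n), or (1-γ_{n+1})X_n, with γ_{n+1} ∈ (0,1), then f(X_{n+1}) ≥ (1-γ_{n+1}) f(X_n); consequently the sequence (S_n f(X_n))_{n≥0} with S_n = ∏_{k=1}^n (1-γ_k)^{-1} is nondecreasing. -/
open Finset

theorem stmt_8 (γ : ℕ → ℝ) (X : ℕ → ℝ) (f : ℝ → ℝ) (S : ℕ → ℝ)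
    (hf : ∀ x, f x = x * (1 - x))
    (hS : ∀ n, S n = (∏ k ∈ Finset.Icc 1 n, (1 - γ k))⁻¹)
    (hpos : ∀ n, 1 ≤ n → 0 < γ n) (hlt : ∀ n, 1 ≤ n → γ n < 1)
    (hX : ∀ n, 0 ≤ X n ∧ X n ≤ 1)
    (hstep : ∀ n, X (n + 1) = X n ∨ X (n + 1) = X n + γ (n + 1) * (1 - X n) ∨
      X (n + 1) = (1 - γ (n + 1)) * X n) :
    (∀ n, (1 - γ (n + 1)) * f (X n) ≤ f (X (n + 1))) ∧
    (∀ n, S n * f (X n) ≤ S (n + 1) * f (X (n + 1))) := by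
  have key : ∀ n, (1 - γ (n + 1)) * f (X n) ≤ f (X (n + 1)) := by
    intro n
    have hg0 := hpos (n + 1) (by omega)
    have hg1 := hlt (n + 1) (by omega)
    obtain ⟨h0, h1⟩ := hX n
    rcases hstep n with h | h | h <;> simp only [h, hf]
    · nlinarith [mul_nonneg h0 (sub_nonneg.mpr h1)]
    · nlinarith [mul_nonneg (mul_nonneg hg0.le (by linarith : (0:ℝ) ≤ 1 - γ (n+1)))
        (sq_nonneg (1 - X n))]
    · nlinarith [mul_nonneg (mul_nonneg hg0.le (by linarith : (0:ℝ) ≤ 1 - γ (n+1)))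
        (sq_nonneg (X n))]
  have hprodpos : ∀ n, 0 < ∏ k ∈ Finset.Icc 1 n, (1 - γ k) := by
    intro n
    apply Finset.prod_pos
    intro k hk
    have := hlt k (Finset.mem_Icc.mp hk).1
    linarith
  refine ⟨key, fun n => ?_⟩
  have hSn : S n = (∏ k ∈ Finset.Icc 1 n, (1 - γ k))⁻¹ := hS n
  have hSn1 : S (n + 1) = (∏ k ∈ Finset.Icc 1 n, (1 - γ k))⁻¹ * (1 - γ (n + 1))⁻¹ := by
    rw [hS (n + 1), Finset.prod_Icc_succ_top (by omega : 1 ≤ n + 1), mul_inv]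
  have hg1 := hlt (n + 1) (by omega)
  have hg0 := hpos (n + 1) (by omega)
  have h1g : (0:ℝ) < 1 - γ (n + 1) := by linarith
  have hP := hprodpos n
  have hPinv : (0:ℝ) < (∏ k ∈ Finset.Icc 1 n, (1 - γ k))⁻¹ := by positivity
  have hk := key n
  calc S n * f (X n) = (∏ k ∈ Finset.Icc 1 n, (1 - γ k))⁻¹ * (1 - γ (n + 1))⁻¹ *
        ((1 - γ (n + 1)) * f (X n)) := by
        rw [hSn]; field_simp
    _ ≤ S (n + 1) * f (X (n + 1)) := by
        rw [hSn1]
        have := mul_pos hPinv (inv_pos.mpr h1g)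
        exact mul_le_mul_of_nonneg_left hk this.le
end

section
/- Under conditions (S) and (E2), for ℓ ∈ {A,B}, the series Σ_{k=1}^n γ_k (η_{ℓ,k} − θ_ℓ) converges to a finite limit as n → ∞. -/
open Finset Filter

private lemma aux_exp_sub_one (x : ℝ) : Real.exp x - 1 ≤ x * Real.exp x := by
  have h1 : (-x) + 1 ≤ Real.exp (-x) := Real.add_one_le_exp _
  have h2 : Real.exp (-x) * Real.exp x = 1 := by
    rw [← Real.exp_add]; simp
  nlinarith [Real.exp_pos x]

private lemma aux_telescope (ε : ℝ) (hε : 0 < ε) (a b : ℝ) (ha : 0 < a) (hab : a ≤ b) :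
    (b - a) / b ^ (1 + ε) ≤ (a ^ (-ε) - b ^ (-ε)) / ε := by
  have hb : 0 < b := lt_of_lt_of_le ha hab
  rw [div_le_div_iff₀ (Real.rpow_pos_of_pos hb _) hε]
  set t := a / b with ht
  have ht0 : 0 < t := div_pos ha hb
  have ht1 : t ≤ 1 := (div_le_one hb).2 hab
  have hat : a = t * b := (div_mul_cancel₀ a hb.ne').symm
  have h1 : a ^ (-ε) = t ^ (-ε) * b ^ (-ε) := by
    rw [hat, Real.mul_rpow ht0.le hb.le]
  have h2 : b ^ (-ε) * b ^ (1 + ε) = b := by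
    rw [← Real.rpow_add hb]; norm_num
  have h3 : (1:ℝ) + ε * (1 - t) ≤ t ^ (-ε) := by
    have hlog : Real.log t ≤ t - 1 := Real.log_le_sub_one_of_pos ht0
    have h4 := Real.add_one_le_exp (Real.log t * -ε)
    rw [Real.rpow_def_of_pos ht0]
    nlinarith [mul_le_mul_of_nonneg_right (by linarith : 1 - t ≤ -Real.log t) hε.le]
  have hbp : (0:ℝ) < b ^ (1 + ε) := Real.rpow_pos_of_pos hb _
  calc (b - a) * ε = (ε * (1 - t)) * b := by rw [hat]; ring
  _ ≤ (t ^ (-ε) - 1) * b := by nlinarith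
  _ = (t ^ (-ε) * b ^ (-ε) - b ^ (-ε)) * b ^ (1 + ε) := by
      have h5 : (t ^ (-ε) * b ^ (-ε) - b ^ (-ε)) * b ^ (1 + ε)
          = (t ^ (-ε) - 1) * (b ^ (-ε) * b ^ (1 + ε)) := by ring
      rw [h5, h2]
  _ = (a ^ (-ε) - b ^ (-ε)) * b ^ (1 + ε) := by rw [h1]

set_option maxHeartbeats 1000000 in
private lemma master (γ Γ : ℕ → ℝ) (x R : ℕ → ℝ) (θ ε C : ℝ)
    (hθ : 0 < θ) (hε : 0 < ε) (hC : 0 < C)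
    (hΓ : ∀ n, Γ n = ∑ k ∈ Icc 1 n, γ k)
    (hpos : ∀ n, 1 ≤ n → 0 < γ n)
    (hmono : ∀ n, 1 ≤ n → γ (n + 1) ≤ γ n)
    (htend : Tendsto Γ atTop atTop)
    (hO : ∀ n, 1 ≤ n → γ n ≤ C * Γ n * Real.exp (-θ * Γ n))
    (hT : ∀ n, |∑ i ∈ Icc 1 n, x i| ≤ R n)
    (hR0 : R 0 = 0)
    (hE2 : Tendsto (fun n : ℕ => R n * (Real.log (n + 2)) ^ (1 + ε) / n) atTop (nhds 0)) :
    ∃ L, Tendsto (fun n => ∑ k ∈ Icc 1 n, γ k * x k) atTop (nhds L) := by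
  set T : ℕ → ℝ := fun n => ∑ i ∈ Icc 1 n, x i with hTdef
  have hT0 : T 0 = 0 := by simp [hTdef]
  have hTsucc : ∀ n, T (n + 1) = T n + x (n + 1) := fun n =>
    Finset.sum_Icc_succ_top (by omega) x
  have hRnn : ∀ n, 0 ≤ R n := fun n => (abs_nonneg _).trans (hT n)
  have hΓ0 : Γ 0 = 0 := by rw [hΓ]; simp
  have hΓsucc : ∀ n, Γ (n + 1) = Γ n + γ (n + 1) := fun n => by
    rw [hΓ, hΓ, Finset.sum_Icc_succ_top (by omega)]
  have hγnn : ∀ n, 1 ≤ n → 0 ≤ γ n := fun n h => (hpos n h).le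
  have hΓmono : ∀ m n, m ≤ n → Γ m ≤ Γ n := by
    intro m n h
    rw [hΓ, hΓ]
    apply Finset.sum_le_sum_of_subset_of_nonneg (Finset.Icc_subset_Icc_right h)
    intro i hi _
    exact hγnn i (Finset.mem_Icc.1 hi).1
  have hΓpos : ∀ n, 1 ≤ n → 0 < Γ n := by
    intro n hn
    have h1 : Γ 1 = γ 1 := by rw [show (1:ℕ) = 0 + 1 from rfl, hΓsucc, hΓ0]; ring
    calc (0:ℝ) < γ 1 := hpos 1 le_rfl
    _ = Γ 1 := h1.symm
    _ ≤ Γ n := hΓmono 1 n hn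
  have hΓnn : ∀ n, 0 ≤ Γ n := by
    intro n
    rcases Nat.eq_zero_or_pos n with h | h
    · rw [h, hΓ0]
    · exact (hΓpos n h).le
  have hγanti : ∀ m n, 1 ≤ m → m ≤ n → γ n ≤ γ m := by
    intro m n h1 h
    induction n, h using Nat.le_induction with
    | base => exact le_rfl
    | succ n hmn ih => exact le_trans (hmono n (le_trans h1 hmn)) ih
  have hnγ : ∀ n : ℕ, 1 ≤ n → (n : ℝ) * γ n ≤ Γ n := by
    intro n hn
    rw [hΓ]
    have h1 : ∀ i ∈ Icc 1 n, γ n ≤ γ i := fun i hi =>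
      hγanti i n (Finset.mem_Icc.1 hi).1 (Finset.mem_Icc.1 hi).2
    have h2 := Finset.card_nsmul_le_sum (Icc 1 n) γ (γ n) h1
    rwa [Nat.card_Icc, Nat.add_sub_cancel, nsmul_eq_mul] at h2
  have hexp : ∀ n, Real.exp (θ * Γ n) ≤ Real.exp θ + θ * C * n * Γ n := by
    intro n
    induction n with
    | zero => simpa [hΓ0] using Real.one_le_exp hθ.le
    | succ n ih =>
      have hΓn1 : 0 < Γ (n + 1) := hΓpos (n + 1) (by omega)
      have h1 : γ (n + 1) * Real.exp (θ * Γ (n + 1)) ≤ C * Γ (n + 1) := by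
        have h0 := hO (n + 1) (by omega)
        have e : Real.exp (-θ * Γ (n + 1)) * Real.exp (θ * Γ (n + 1)) = 1 := by
          rw [← Real.exp_add]; ring_nf; exact Real.exp_zero
        have h6 := mul_le_mul_of_nonneg_right h0 (Real.exp_pos (θ * Γ (n + 1))).le
        rwa [mul_assoc, e, mul_one] at h6
      have h2 : Real.exp (θ * γ (n + 1)) - 1 ≤ θ * γ (n + 1) * Real.exp (θ * γ (n + 1)) :=
        aux_exp_sub_one _
      have h3 : Real.exp (θ * Γ (n + 1)) = Real.exp (θ * Γ n) * Real.exp (θ * γ (n + 1)) := by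
        rw [← Real.exp_add, hΓsucc]; ring_nf
      have h4 : Real.exp (θ * Γ (n + 1)) - Real.exp (θ * Γ n) ≤ θ * C * Γ (n + 1) := by
        have e1 : Real.exp (θ * Γ n) * (Real.exp (θ * γ (n + 1)) - 1)
            ≤ Real.exp (θ * Γ n) * (θ * γ (n + 1) * Real.exp (θ * γ (n + 1))) :=
          mul_le_mul_of_nonneg_left h2 (Real.exp_pos _).le
        have e2 : Real.exp (θ * Γ n) * (θ * γ (n + 1) * Real.exp (θ * γ (n + 1)))
            = θ * (γ (n + 1) * Real.exp (θ * Γ (n + 1))) := by rw [h3]; ring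
        have e3 : θ * (γ (n + 1) * Real.exp (θ * Γ (n + 1))) ≤ θ * (C * Γ (n + 1)) :=
          mul_le_mul_of_nonneg_left h1 hθ.le
        nlinarith [e1, e2, e3]
      have h5 : θ * C * (n:ℝ) * Γ n ≤ θ * C * (n:ℝ) * Γ (n + 1) := by
        have hm := hΓmono n (n + 1) (by omega)
        have a1 : (0:ℝ) ≤ θ * C * (n:ℝ) := by positivity
        have a2 := mul_le_mul_of_nonneg_left hm a1
        nlinarith [a2]
      push_cast
      push_cast at ih
      nlinarith [h4, ih, h5, mul_nonneg (mul_nonneg hθ.le hC.le) hΓn1.le]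
  -- threshold M
  set M : ℝ := max 1 (max (2 / θ) (16 * (θ * C + Real.exp θ + 1) / θ ^ 2)) with hM
  have hM1 : (1:ℝ) ≤ M := le_max_left _ _
  have hM2 : 2 / θ ≤ M := le_trans (le_max_left _ _) (le_max_right _ _)
  have hM3 : 16 * (θ * C + Real.exp θ + 1) / θ ^ 2 ≤ M :=
    le_trans (le_max_right _ _) (le_max_right _ _)
  have hlogΓ : ∀ k : ℕ, M ≤ Γ k → θ / 2 * Γ k ≤ Real.log ((k:ℝ) + 2) := by
    intro k hk
    by_contra hcon
    push_neg at hcon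
    have hGpos : (0:ℝ) < Γ k := lt_of_lt_of_le (by linarith) hk
    have hkpos : (0:ℝ) < (k:ℝ) + 2 := by positivity
    have hklt : (k:ℝ) + 2 < Real.exp (θ / 2 * Γ k) := by
      have := Real.exp_log hkpos
      calc (k:ℝ) + 2 = Real.exp (Real.log ((k:ℝ) + 2)) := this.symm
      _ < Real.exp (θ / 2 * Γ k) := Real.exp_lt_exp.2 hcon
    have hEq : Real.exp (θ * Γ k) = Real.exp (θ / 2 * Γ k) * Real.exp (θ / 2 * Γ k) := by
      rw [← Real.exp_add]; ring_nf
    have hE4 : 1 + θ / 4 * Γ k ≤ Real.exp (θ / 4 * Γ k) := by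
      have := Real.add_one_le_exp (θ / 4 * Γ k); linarith
    have hEsq : Real.exp (θ / 2 * Γ k) = Real.exp (θ / 4 * Γ k) * Real.exp (θ / 4 * Γ k) := by
      rw [← Real.exp_add]; ring_nf
    have hquad : θ ^ 2 * Γ k ^ 2 / 16 ≤ Real.exp (θ / 2 * Γ k) := by
      rw [hEsq]
      nlinarith [hE4, mul_pos hθ hGpos]
    have hbound := hexp k
    set E := Real.exp (θ / 2 * Γ k) with hE
    have hE1 : (1:ℝ) ≤ E := Real.one_le_exp (by positivity)
    have hG1 : (1:ℝ) ≤ Γ k := le_trans hM1 hk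
    have hEG : (θ * C + Real.exp θ + 1) * Γ k ≤ E := by
      have b1 : 16 * (θ * C + Real.exp θ + 1) / θ ^ 2 ≤ Γ k := le_trans hM3 hk
      have b2 : 16 * (θ * C + Real.exp θ + 1) ≤ θ ^ 2 * Γ k := by
        rw [div_le_iff₀ (by positivity)] at b1; linarith
      have b3 := mul_le_mul_of_nonneg_right b2 hGpos.le
      linarith [hquad, b3]
    have hlt2 : E * E ≤ Real.exp θ + θ * C * ((k:ℝ) + 2) * Γ k := by
      rw [hEq] at hbound
      have h7 := mul_le_mul_of_nonneg_right
        (mul_le_mul_of_nonneg_left (by linarith : (k:ℝ) ≤ (k:ℝ) + 2)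
          (by positivity : (0:ℝ) ≤ θ * C)) hGpos.le
      linarith
    have hlt3 : E * E ≤ Real.exp θ + θ * C * E * Γ k := by
      have h8 := mul_le_mul_of_nonneg_right
        (mul_le_mul_of_nonneg_left hklt.le (by positivity : (0:ℝ) ≤ θ * C)) hGpos.le
      linarith
    have hGE : (1:ℝ) ≤ Γ k * E := by
      have := mul_le_mul hG1 hE1 zero_le_one (le_trans zero_le_one hG1)
      simpa using this
    have m1 := mul_le_mul_of_nonneg_right hEG (by positivity : (0:ℝ) ≤ E)
    have m2 : Real.exp θ ≤ Real.exp θ * (Γ k * E) := by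
      have := mul_le_mul_of_nonneg_left hGE (Real.exp_pos θ).le
      simpa using this
    linarith [m1, m2, hGE, hlt3]
  -- N1
  obtain ⟨N0, hN0⟩ := (Filter.tendsto_atTop.mp htend M).exists_forall_of_atTop
  set N1 : ℕ := max N0 1 with hN1def
  have hN11 : 1 ≤ N1 := le_max_right _ _
  have hN1 : ∀ n, N1 ≤ n → M ≤ Γ n := fun n hn => hN0 n (le_trans (le_max_left _ _) hn)
  -- L
  set L : ℕ → ℝ := fun k => Real.log ((k:ℝ) + 2) ^ (1 + ε) with hLdef
  have hlogpos : ∀ k : ℕ, 0 < Real.log ((k:ℝ) + 2) := by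
    intro k
    apply Real.log_pos
    have : (0:ℝ) ≤ (k:ℝ) := Nat.cast_nonneg k
    linarith
  have hLpos : ∀ k : ℕ, 0 < L k := fun k => Real.rpow_pos_of_pos (hlogpos k) _
  have hLmono : ∀ k : ℕ, L k ≤ L (k + 1) := by
    intro k
    apply Real.rpow_le_rpow (hlogpos k).le _ (by linarith)
    apply Real.log_le_log (by positivity : (0:ℝ) < (k:ℝ) + 2)
    push_cast
    linarith
  have hLk : ∀ k, N1 ≤ k → (θ / 2) ^ (1 + ε) * Γ k ^ (1 + ε) ≤ L k := by
    intro k hk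
    have h1 : θ / 2 * Γ k ≤ Real.log ((k:ℝ) + 2) := hlogΓ k (hN1 k hk)
    have h2 : (θ / 2 * Γ k) ^ (1 + ε) ≤ L k :=
      Real.rpow_le_rpow (mul_nonneg (by positivity) (hΓnn k)) h1 (by linarith)
    rwa [Real.mul_rpow (by positivity) (hΓnn k)] at h2
  -- bound on the E2 quantity
  obtain ⟨K', hK'⟩ := hE2.bddAbove_range
  have hK'' : ∀ n : ℕ, R n * L n / (n:ℝ) ≤ K' := fun n => hK' (Set.mem_range_self n)
  have hK'0 : 0 ≤ K' := by
    have := hK'' 0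
    simpa using this
  set a : ℕ → ℝ := fun k => (k:ℝ) / L k with hadef
  have ha0 : a 0 = 0 := by simp [hadef]
  have hann : ∀ k, 0 ≤ a k := fun k => div_nonneg (Nat.cast_nonneg k) (hLpos k).le
  have hRa : ∀ k : ℕ, 1 ≤ k → R k ≤ K' * a k := by
    intro k hk
    have hk0 : (0:ℝ) < (k:ℝ) := by exact_mod_cast hk
    have h1 := hK'' k
    rw [div_le_iff₀ hk0] at h1
    have h2 : R k ≤ K' * (k:ℝ) / L k := (le_div_iff₀ (hLpos k)).2 h1
    simpa [hadef, mul_div_assoc] using h2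
  -- Abel bound for the weights
  have ind1 : ∀ n, (∑ k ∈ Icc 1 n, (γ k - γ (k + 1)) * a k) + γ (n + 1) * a n
      ≤ ∑ k ∈ Icc 1 n, γ k / L k := by
    intro n
    induction n with
    | zero => simp [ha0]
    | succ n ih =>
      rw [Finset.sum_Icc_succ_top (by omega), Finset.sum_Icc_succ_top (by omega)]
      have hγ1 : 0 ≤ γ (n + 1) := hγnn _ (by omega)
      have hstep : a (n + 1) - a n ≤ 1 / L (n + 1) := by
        have h1 : (n:ℝ) / L (n + 1) ≤ (n:ℝ) / L n :=
          div_le_div_of_nonneg_left (Nat.cast_nonneg n) (hLpos n) (hLmono n)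
        have h2 : a (n + 1) = (n:ℝ) / L (n + 1) + 1 / L (n + 1) := by
          rw [hadef]
          push_cast
          rw [← add_div]
        rw [h2, hadef]
        linarith
      have key : γ (n + 1) * a (n + 1) - γ (n + 1) * a n ≤ γ (n + 1) / L (n + 1) := by
        have h3 := mul_le_mul_of_nonneg_left hstep hγ1
        calc γ (n + 1) * a (n + 1) - γ (n + 1) * a n = γ (n + 1) * (a (n + 1) - a n) := by ring
        _ ≤ γ (n + 1) * (1 / L (n + 1)) := h3
        _ = γ (n + 1) / L (n + 1) := by ring
      linarith
  -- telescoping tail bound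
  have ind2 : ∀ n, N1 ≤ n → ∑ k ∈ Ioc N1 n, γ k / L k
      ≤ (2 / θ) ^ (1 + ε) / ε * (Γ N1 ^ (-ε) - Γ n ^ (-ε)) := by
    intro n hn
    induction n, hn using Nat.le_induction with
    | base => simp
    | succ n hn ih =>
      rw [Finset.sum_Ioc_succ_top hn]
      have hΓn : 0 < Γ n := hΓpos n (le_trans hN11 hn)
      have hγp : 0 < γ (n + 1) := hpos _ (by omega)
      have hd : Γ (n + 1) - Γ n = γ (n + 1) := by rw [hΓsucc]; ring
      have htel : γ (n + 1) / Γ (n + 1) ^ (1 + ε) ≤ (Γ n ^ (-ε) - Γ (n + 1) ^ (-ε)) / ε := by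
        have h0 := aux_telescope ε hε (Γ n) (Γ (n + 1)) hΓn (by rw [hΓsucc]; linarith)
        rwa [hd] at h0
      have hstep : γ (n + 1) / L (n + 1)
          ≤ (2 / θ) ^ (1 + ε) / ε * (Γ n ^ (-ε) - Γ (n + 1) ^ (-ε)) := by
        have hΓn1 : 0 < Γ (n + 1) := hΓpos _ (by omega)
        have hsp : (0:ℝ) < (θ / 2) ^ (1 + ε) := Real.rpow_pos_of_pos (by positivity) _
        have hGp : (0:ℝ) < Γ (n + 1) ^ (1 + ε) := Real.rpow_pos_of_pos hΓn1 _
        have hL : (θ / 2) ^ (1 + ε) * Γ (n + 1) ^ (1 + ε) ≤ L (n + 1) := hLk (n + 1) (by omega)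
        have h1 : γ (n + 1) / L (n + 1) ≤ γ (n + 1) / ((θ / 2) ^ (1 + ε) * Γ (n + 1) ^ (1 + ε)) :=
          div_le_div_of_nonneg_left hγp.le (by positivity) hL
        have hinv : (2 / θ) ^ (1 + ε) = ((θ / 2) ^ (1 + ε))⁻¹ := by
          rw [← Real.inv_rpow (by positivity : (0:ℝ) ≤ θ / 2)]
          norm_num
        have h2 : γ (n + 1) / ((θ / 2) ^ (1 + ε) * Γ (n + 1) ^ (1 + ε))
            = (2 / θ) ^ (1 + ε) * (γ (n + 1) / Γ (n + 1) ^ (1 + ε)) := by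
          rw [hinv]
          field_simp
        have h3 : (2 / θ) ^ (1 + ε) * (γ (n + 1) / Γ (n + 1) ^ (1 + ε))
            ≤ (2 / θ) ^ (1 + ε) * ((Γ n ^ (-ε) - Γ (n + 1) ^ (-ε)) / ε) := by
          apply mul_le_mul_of_nonneg_left htel
          positivity
        calc γ (n + 1) / L (n + 1) ≤ γ (n + 1) / ((θ / 2) ^ (1 + ε) * Γ (n + 1) ^ (1 + ε)) := h1
        _ = (2 / θ) ^ (1 + ε) * (γ (n + 1) / Γ (n + 1) ^ (1 + ε)) := h2
        _ ≤ (2 / θ) ^ (1 + ε) * ((Γ n ^ (-ε) - Γ (n + 1) ^ (-ε)) / ε) := h3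
        _ = (2 / θ) ^ (1 + ε) / ε * (Γ n ^ (-ε) - Γ (n + 1) ^ (-ε)) := by ring
      have expand : (2 / θ) ^ (1 + ε) / ε * (Γ N1 ^ (-ε) - Γ n ^ (-ε))
          + (2 / θ) ^ (1 + ε) / ε * (Γ n ^ (-ε) - Γ (n + 1) ^ (-ε))
          = (2 / θ) ^ (1 + ε) / ε * (Γ N1 ^ (-ε) - Γ (n + 1) ^ (-ε)) := by ring
      linarith
  -- uniform bound for weighted sums
  set W0 : ℝ := ∑ k ∈ Icc 1 N1, γ k / L k with hW0def
  set W : ℝ := W0 + (2 / θ) ^ (1 + ε) / ε * Γ N1 ^ (-ε) with hWdef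
  have hterm_nn : ∀ k ∈ Icc 1 N1, 0 ≤ γ k / L k := fun k hk =>
    div_nonneg (hγnn k (Finset.mem_Icc.1 hk).1) (hLpos k).le
  have hW0nn : 0 ≤ W0 := Finset.sum_nonneg hterm_nn
  have hcoeff_nn : (0:ℝ) ≤ (2 / θ) ^ (1 + ε) / ε :=
    div_nonneg (Real.rpow_nonneg (by positivity) _) hε.le
  have hΓN1pos : 0 < Γ N1 := hΓpos N1 hN11
  have hWnn : 0 ≤ W := by
    have : (0:ℝ) ≤ (2 / θ) ^ (1 + ε) / ε * Γ N1 ^ (-ε) :=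
      mul_nonneg hcoeff_nn (Real.rpow_nonneg hΓN1pos.le _)
    rw [hWdef]; linarith
  have hW : ∀ n, ∑ k ∈ Icc 1 n, γ k / L k ≤ W := by
    intro n
    rcases le_or_gt n N1 with h | h
    · have h1 : ∑ k ∈ Icc 1 n, γ k / L k ≤ W0 := by
        rw [hW0def]
        apply Finset.sum_le_sum_of_subset_of_nonneg (Finset.Icc_subset_Icc_right h)
        intro i hi _
        exact div_nonneg (hγnn i (Finset.mem_Icc.1 hi).1) (hLpos i).le
      have h2 : (0:ℝ) ≤ (2 / θ) ^ (1 + ε) / ε * Γ N1 ^ (-ε) :=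
        mul_nonneg hcoeff_nn (Real.rpow_nonneg hΓN1pos.le _)
      rw [hWdef]; linarith
    · have hsplit : (∑ k ∈ Ioc 0 N1, γ k / L k) + ∑ k ∈ Ioc N1 n, γ k / L k
          = ∑ k ∈ Ioc 0 n, γ k / L k :=
        Finset.sum_Ioc_consecutive _ (Nat.zero_le _) h.le
      have e1 : Icc 1 n = Ioc 0 n := Finset.Icc_add_one_left_eq_Ioc 0 n
      have e2 : Icc 1 N1 = Ioc 0 N1 := Finset.Icc_add_one_left_eq_Ioc 0 N1
      have h3 := ind2 n h.le
      have h4 : (2 / θ) ^ (1 + ε) / ε * (Γ N1 ^ (-ε) - Γ n ^ (-ε))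
          ≤ (2 / θ) ^ (1 + ε) / ε * Γ N1 ^ (-ε) := by
        have h5 : (0:ℝ) ≤ Γ n ^ (-ε) := Real.rpow_nonneg (hΓnn n) _
        have h6 : Γ N1 ^ (-ε) - Γ n ^ (-ε) ≤ Γ N1 ^ (-ε) := by linarith
        exact mul_le_mul_of_nonneg_left h6 hcoeff_nn
      rw [e1, ← hsplit, hWdef, hW0def, e2]
      linarith
  -- the Abel series
  set f : ℕ → ℝ := fun k => (γ k - γ (k + 1)) * T k with hfdef
  set g : ℕ → ℝ := fun k => |γ k - γ (k + 1)| * R k with hgdef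
  have hf0 : f 0 = 0 := by simp [hfdef, hT0]
  have hfg : ∀ k, |f k| ≤ g k := by
    intro k
    rw [hfdef, hgdef, abs_mul]
    exact mul_le_mul_of_nonneg_left (hT k) (abs_nonneg _)
  have hgnn : ∀ k, 0 ≤ g k := fun k => mul_nonneg (abs_nonneg _) (hRnn k)
  have hIccRange : ∀ (h : ℕ → ℝ) (m : ℕ), ∑ k ∈ Icc 1 m, h k = ∑ i ∈ range m, h (i + 1) := by
    intro h m
    rw [← Finset.Ico_add_one_right_eq_Icc, Finset.sum_Ico_eq_sum_range]
    simp [add_comm]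
  have hgbound : ∀ m, ∑ k ∈ Icc 1 m, g k ≤ K' * W := by
    intro m
    have step1 : ∀ k ∈ Icc 1 m, g k ≤ K' * ((γ k - γ (k + 1)) * a k) := by
      intro k hk
      have hk1 : 1 ≤ k := (Finset.mem_Icc.1 hk).1
      have hc : 0 ≤ γ k - γ (k + 1) := sub_nonneg.2 (hmono k hk1)
      show |γ k - γ (k + 1)| * R k ≤ K' * ((γ k - γ (k + 1)) * a k)
      rw [abs_of_nonneg hc]
      calc (γ k - γ (k + 1)) * R k ≤ (γ k - γ (k + 1)) * (K' * a k) :=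
        mul_le_mul_of_nonneg_left (hRa k hk1) hc
      _ = K' * ((γ k - γ (k + 1)) * a k) := by ring
    calc ∑ k ∈ Icc 1 m, g k ≤ ∑ k ∈ Icc 1 m, K' * ((γ k - γ (k + 1)) * a k) :=
      Finset.sum_le_sum step1
    _ = K' * ∑ k ∈ Icc 1 m, (γ k - γ (k + 1)) * a k := by rw [Finset.mul_sum]
    _ ≤ K' * ∑ k ∈ Icc 1 m, γ k / L k := by
        apply mul_le_mul_of_nonneg_left _ hK'0
        have := ind1 m
        have h7 : 0 ≤ γ (m + 1) * a m := mul_nonneg (hγnn _ (by omega)) (hann m)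
        linarith
    _ ≤ K' * W := mul_le_mul_of_nonneg_left (hW m) hK'0
  have hgsummable : Summable g := by
    apply summable_of_sum_range_le hgnn
    intro n
    match n with
    | 0 => simp; exact mul_nonneg hK'0 hWnn
    | m + 1 =>
      rw [Finset.sum_range_succ']
      have hg0 : g 0 = 0 := by simp [hgdef, hR0]
      rw [hg0, add_zero, ← hIccRange g m]
      exact hgbound m
  have hfabs : Summable (fun k => |f k|) :=
    Summable.of_nonneg_of_le (fun k => abs_nonneg _) hfg hgsummable
  have hfsummable : Summable f := hfabs.of_abs
  have hA : Tendsto (fun n => ∑ i ∈ range n, f i) atTop (nhds (∑' k, f k)) :=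
    hfsummable.hasSum.tendsto_sum_nat
  have hA' : Tendsto (fun n => ∑ k ∈ Icc 1 n, f k) atTop (nhds (∑' k, f k)) := by
    have heq : ∀ n, ∑ k ∈ Icc 1 n, f k = ∑ i ∈ range (n + 1), f i := by
      intro n
      rw [Finset.sum_range_succ', hf0, add_zero, hIccRange f n]
    have hcomp : Tendsto (fun n : ℕ => ∑ i ∈ range (n + 1), f i) atTop (nhds (∑' k, f k)) :=
      hA.comp (tendsto_add_atTop_nat 1)
    exact hcomp.congr fun n => (heq n).symm
  -- Abel identity
  have ind3 : ∀ n, ∑ k ∈ Icc 1 n, γ k * x k = (∑ k ∈ Icc 1 n, f k) + γ (n + 1) * T n := by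
    intro n
    induction n with
    | zero => simp [hT0]
    | succ n ih =>
      rw [Finset.sum_Icc_succ_top (by omega), Finset.sum_Icc_succ_top (by omega), ih]
      simp only [hfdef]
      rw [hTsucc]
      ring
  -- the boundary term tends to zero
  have hB : Tendsto (fun n => γ (n + 1) * T n) atTop (nhds 0) := by
    set KΓ : ℝ := (2 / θ) ^ (1 + ε) * M ^ (-ε) with hKΓ
    have hKΓnn : 0 ≤ KΓ := mul_nonneg (Real.rpow_nonneg (by positivity) _)
      (Real.rpow_nonneg (by linarith) _)
    have hbnd : ∀ n, N1 ≤ n → |γ (n + 1) * T n| ≤ KΓ * (R n * L n / (n:ℝ)) := by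
      intro n hn
      have hn1 : 1 ≤ n := le_trans hN11 hn
      have hn0 : (0:ℝ) < (n:ℝ) := by exact_mod_cast hn1
      have hγ1 : 0 ≤ γ (n + 1) := hγnn _ (by omega)
      have hΓn : 0 < Γ n := hΓpos n hn1
      have s1 : |γ (n + 1) * T n| ≤ γ (n + 1) * R n := by
        rw [abs_mul, abs_of_nonneg hγ1]
        exact mul_le_mul_of_nonneg_left (hT n) hγ1
      have s2 : γ (n + 1) * R n ≤ γ n * R n :=
        mul_le_mul_of_nonneg_right (hmono n hn1) (hRnn n)
      have s3 : γ n * R n ≤ Γ n / (n:ℝ) * R n := by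
        apply mul_le_mul_of_nonneg_right _ (hRnn n)
        rw [le_div_iff₀ hn0]
        have := hnγ n hn1
        linarith
      have s4 : Γ n / (n:ℝ) * R n = Γ n / L n * (R n * L n / (n:ℝ)) := by
        field_simp [hn0.ne', (hLpos n).ne']
      have s5 : Γ n / L n ≤ KΓ := by
        have hL : (θ / 2) ^ (1 + ε) * Γ n ^ (1 + ε) ≤ L n := hLk n hn
        have hGp : (0:ℝ) < Γ n ^ (1 + ε) := Real.rpow_pos_of_pos hΓn _
        have hsp : (0:ℝ) < (θ / 2) ^ (1 + ε) := Real.rpow_pos_of_pos (by positivity) _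
        have t1 : Γ n / L n ≤ Γ n / ((θ / 2) ^ (1 + ε) * Γ n ^ (1 + ε)) :=
          div_le_div_of_nonneg_left hΓn.le (by positivity) hL
        have t2 : Γ n / ((θ / 2) ^ (1 + ε) * Γ n ^ (1 + ε)) = (2 / θ) ^ (1 + ε) * Γ n ^ (-ε) := by
          have hinv : (2 / θ) ^ (1 + ε) = ((θ / 2) ^ (1 + ε))⁻¹ := by
            rw [← Real.inv_rpow (by positivity : (0:ℝ) ≤ θ / 2)]
            norm_num
          have e3 : Γ n ^ (1 + ε) = Γ n * Γ n ^ ε := by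
            rw [Real.rpow_add hΓn, Real.rpow_one]
          have e4 : Γ n ^ (-ε) = (Γ n ^ ε)⁻¹ := Real.rpow_neg (hΓnn n) ε
          have hεp : (0:ℝ) < Γ n ^ ε := Real.rpow_pos_of_pos hΓn _
          rw [hinv, e3, e4]
          field_simp
        have t3 : (2 / θ) ^ (1 + ε) * Γ n ^ (-ε) ≤ (2 / θ) ^ (1 + ε) * M ^ (-ε) := by
          apply mul_le_mul_of_nonneg_left _ (Real.rpow_nonneg (by positivity) _)
          exact Real.rpow_le_rpow_of_nonpos (by linarith) (hN1 n hn) (by linarith)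
        rw [hKΓ]
        calc Γ n / L n ≤ Γ n / ((θ / 2) ^ (1 + ε) * Γ n ^ (1 + ε)) := t1
        _ = (2 / θ) ^ (1 + ε) * Γ n ^ (-ε) := t2
        _ ≤ (2 / θ) ^ (1 + ε) * M ^ (-ε) := t3
      have s6 : Γ n / L n * (R n * L n / (n:ℝ)) ≤ KΓ * (R n * L n / (n:ℝ)) := by
        exact mul_le_mul_of_nonneg_right s5
          (div_nonneg (mul_nonneg (hRnn n) (hLpos n).le) (Nat.cast_nonneg n))
      calc |γ (n + 1) * T n| ≤ γ (n + 1) * R n := s1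
      _ ≤ γ n * R n := s2
      _ ≤ Γ n / (n:ℝ) * R n := s3
      _ = Γ n / L n * (R n * L n / (n:ℝ)) := s4
      _ ≤ KΓ * (R n * L n / (n:ℝ)) := s6
    have hev : ∀ᶠ n in atTop, ‖γ (n + 1) * T n‖ ≤ KΓ * (R n * L n / (n:ℝ)) :=
      eventually_atTop.2 ⟨N1, fun n hn => by rw [Real.norm_eq_abs]; exact hbnd n hn⟩
    have hg0 : Tendsto (fun n : ℕ => KΓ * (R n * L n / (n:ℝ))) atTop (nhds 0) := by
      have := hE2.const_mul KΓ
      simpa using this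
    exact squeeze_zero_norm' hev hg0
  refine ⟨∑' k, f k, ?_⟩
  have hfin := hA'.add hB
  rw [add_zero] at hfin
  exact hfin.congr fun n => (ind3 n).symm

theorem stmt_13 (γ Γ : ℕ → ℝ) (ηA ηB : ℕ → ℝ) (θA θB : ℝ) (R : ℕ → ℝ) (ε C : ℝ)
    (hΓ : ∀ n, Γ n = ∑ k ∈ Finset.Icc 1 n, γ k)
    (hpos : ∀ n, 1 ≤ n → 0 < γ n) (hlt : ∀ n, 1 ≤ n → γ n < 1)
    (hmono : ∀ n, 1 ≤ n → γ (n + 1) ≤ γ n)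
    (htend : Tendsto Γ atTop atTop)
    (hC : 0 < C) (hO : ∀ n, 1 ≤ n → γ n ≤ C * Γ n * Real.exp (-θB * Γ n))
    (hηA : ∀ k, ηA k = 0 ∨ ηA k = 1) (hηB : ∀ k, ηB k = 0 ∨ ηB k = 1)
    (hθA : θA ∈ Set.Ioo (0:ℝ) 1) (hθB : θB ∈ Set.Ioo (0:ℝ) 1)
    (hR : ∀ n, R n = max |∑ i ∈ Finset.Icc 1 n, (ηA i - θA)|
                         |∑ i ∈ Finset.Icc 1 n, (ηB i - θB)|)
    (hε : 0 < ε)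
    (hE2 : Tendsto (fun n : ℕ => R n * (Real.log (n + 2)) ^ (1 + ε) / n) atTop (nhds 0)) :
    (∃ LA : ℝ, Tendsto (fun n => ∑ k ∈ Finset.Icc 1 n, γ k * (ηA k - θA)) atTop (nhds LA)) ∧
    (∃ LB : ℝ, Tendsto (fun n => ∑ k ∈ Finset.Icc 1 n, γ k * (ηB k - θB)) atTop (nhds LB)) := by
  have hR0 : R 0 = 0 := by rw [hR]; simp
  have hTA : ∀ n, |∑ i ∈ Finset.Icc 1 n, (ηA i - θA)| ≤ R n := fun n => by
    rw [hR]; exact le_max_left _ _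
  have hTB : ∀ n, |∑ i ∈ Finset.Icc 1 n, (ηB i - θB)| ≤ R n := fun n => by
    rw [hR]; exact le_max_right _ _
  exact ⟨master γ Γ (fun k => ηA k - θA) R θB ε C hθB.1 hε hC hΓ hpos hmono htend hO hTA hR0 hE2,
    master γ Γ (fun k => ηB k - θB) R θB ε C hθB.1 hε hC hΓ hpos hmono htend hO hTB hR0 hE2⟩
end

section
/- Under conditions (S) and (E2), for ℓ ∈ {A,B}, the series Σ_{k=1}^n (γ_k/Γ_k)(η_{ℓ,k} − θ_ℓ) converges to a finite limit as n → ∞. -/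
open Finset Filter

lemma bertrand_summable {ε : ℝ} (hε : 0 < ε) :
    Summable (fun k : ℕ => 1 / ((k : ℝ) * Real.log (k + 1) ^ (1 + ε))) := by
  have hlog2 : (0:ℝ) < Real.log 2 := Real.log_pos (by norm_num)
  have h1ε : (1:ℝ) < 1 + ε := by linarith
  have hnn : ∀ k : ℕ, 0 ≤ 1 / ((k : ℝ) * Real.log (k + 1) ^ (1 + ε)) := by
    intro k
    apply one_div_nonneg.mpr
    apply mul_nonneg (Nat.cast_nonneg k)
    exact Real.rpow_nonneg (Real.log_nonneg (by have := Nat.cast_nonneg (α:=ℝ) k; linarith)) _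
  have hmono : ∀ ⦃m n : ℕ⦄, 0 < m → m ≤ n →
      1 / ((n : ℝ) * Real.log (n + 1) ^ (1 + ε)) ≤ 1 / ((m : ℝ) * Real.log (m + 1) ^ (1 + ε)) := by
    intro m n hm hmn
    have hm1 : (1:ℝ) ≤ (m:ℝ) := by exact_mod_cast hm
    have hmn' : (m:ℝ) ≤ (n:ℝ) := by exact_mod_cast hmn
    apply one_div_le_one_div_of_le
    · apply mul_pos (by exact_mod_cast hm)
      apply Real.rpow_pos_of_pos
      apply Real.log_pos; linarith
    · apply mul_le_mul hmn' ?_ ?_ (Nat.cast_nonneg n)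
      · apply Real.rpow_le_rpow (Real.log_nonneg (by linarith)) ?_ (by linarith)
        apply Real.log_le_log (by linarith); linarith
      · exact Real.rpow_nonneg (Real.log_nonneg (by linarith)) _
  rw [← summable_condensed_iff_of_nonneg hnn hmono]
  rw [← summable_nat_add_iff 1]
  have hsum : Summable (fun n : ℕ => (1 / Real.log 2 ^ (1 + ε)) * (1 / ((n:ℝ) + 1) ^ (1 + ε))) := by
    apply Summable.mul_left
    have := (Real.summable_one_div_nat_rpow (p := 1 + ε)).mpr h1ε
    have h2 := (summable_nat_add_iff (f := fun n : ℕ => 1 / (n:ℝ) ^ (1 + ε)) 1).mpr this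
    apply h2.congr
    intro n; push_cast; ring_nf
  apply Summable.of_nonneg_of_le ?_ ?_ hsum
  · intro n
    apply mul_nonneg (by positivity) (hnn _)
  · intro n
    have h2pow : (0:ℝ) < (2:ℝ) ^ (n+1 : ℕ) := by positivity
    have hcast : ((2 ^ (n+1) : ℕ) : ℝ) = (2:ℝ) ^ (n+1 : ℕ) := by push_cast; ring
    have hlogge : ((n:ℝ) + 1) * Real.log 2 ≤ Real.log ((2:ℝ) ^ (n+1:ℕ) + 1) := by
      calc ((n:ℝ) + 1) * Real.log 2 = Real.log ((2:ℝ) ^ (n+1:ℕ)) := by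
            rw [Real.log_pow]; push_cast; ring
        _ ≤ Real.log ((2:ℝ) ^ (n+1:ℕ) + 1) := Real.log_le_log h2pow (by linarith)
    have hLpos : (0:ℝ) < (((n:ℝ)+1) * Real.log 2) ^ (1 + ε) := by
      apply Real.rpow_pos_of_pos; positivity
    calc (2:ℝ) ^ (n+1:ℕ) * (1 / (((2 ^ (n+1) : ℕ) : ℝ) * Real.log (((2 ^ (n+1):ℕ):ℝ) + 1) ^ (1 + ε)))
        = 1 / Real.log ((2:ℝ) ^ (n+1:ℕ) + 1) ^ (1 + ε) := by
          rw [hcast, mul_one_div, ← div_div, div_self (ne_of_gt h2pow)]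
      _ ≤ 1 / (((n:ℝ)+1) * Real.log 2) ^ (1 + ε) := by
          apply one_div_le_one_div_of_le hLpos
          apply Real.rpow_le_rpow (by positivity) hlogge (by linarith)
      _ = (1 / Real.log 2 ^ (1 + ε)) * (1 / ((n:ℝ) + 1) ^ (1 + ε)) := by
          rw [Real.mul_rpow (by positivity) (by positivity)]
          rw [one_div_mul_one_div]; ring_nf

lemma key_conv (γ Γ : ℕ → ℝ) (x R : ℕ → ℝ) (ε : ℝ) (hε : 0 < ε)
    (hΓ : ∀ n, Γ n = ∑ k ∈ Finset.Icc 1 n, γ k)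
    (hpos : ∀ n, 1 ≤ n → 0 < γ n)
    (hmono : ∀ n, 1 ≤ n → γ (n + 1) ≤ γ n)
    (hRnn : ∀ n, 0 ≤ R n)
    (hSR : ∀ n, |∑ i ∈ Finset.Icc 1 n, x i| ≤ R n)
    (hE2 : Tendsto (fun n : ℕ => R n * (Real.log (n + 2)) ^ (1 + ε) / n) atTop (nhds 0)) :
    ∃ L, Tendsto (fun n => ∑ k ∈ Finset.Icc 1 n, γ k / Γ k * x k) atTop (nhds L) := by
  have bert : Summable (fun k : ℕ => 1 / ((k : ℝ) * Real.log (k + 1) ^ (1 + ε))) :=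
    bertrand_summable hε
  set a : ℕ → ℝ := fun k => γ k / Γ k with ha_def
  set S : ℕ → ℝ := fun n => ∑ i ∈ Finset.Icc 1 n, x i with hS_def
  set Lg : ℕ → ℝ := fun n => Real.log ((n:ℝ) + 2) ^ (1 + ε) with hLg_def
  set b : ℕ → ℝ := fun n => (n : ℝ) / Lg n with hb_def
  set w : ℕ → ℝ := fun k => 1 / ((k : ℝ) * Real.log ((k:ℝ) + 1) ^ (1 + ε)) with hw_def
  set g : ℕ → ℝ := fun k => if k = 0 then 0 else (a k - a (k + 1)) * S k with hg_def
  -- basic positivity facts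
  have hlog2 : (0:ℝ) < Real.log 2 := Real.log_pos (by norm_num)
  have hLgpos : ∀ n : ℕ, 0 < Lg n := by
    intro n
    apply Real.rpow_pos_of_pos
    apply Real.log_pos
    have : (0:ℝ) ≤ (n:ℝ) := Nat.cast_nonneg n
    linarith
  have hLg2 : ∀ n : ℕ, Real.log 2 ^ (1 + ε) ≤ Lg n := by
    intro n
    apply Real.rpow_le_rpow (le_of_lt hlog2) ?_ (by linarith)
    apply Real.log_le_log (by norm_num)
    have : (0:ℝ) ≤ (n:ℝ) := Nat.cast_nonneg n
    linarith
  have hLgmono : ∀ n : ℕ, Lg n ≤ Lg (n + 1) := by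
    intro n
    apply Real.rpow_le_rpow ?_ ?_ (by linarith)
    · apply Real.log_nonneg
      have : (0:ℝ) ≤ (n:ℝ) := Nat.cast_nonneg n
      linarith
    · apply Real.log_le_log
      · have : (0:ℝ) ≤ (n:ℝ) := Nat.cast_nonneg n
        linarith
      · push_cast; linarith
  have hbnn : ∀ n : ℕ, 0 ≤ b n := fun n =>
    div_nonneg (Nat.cast_nonneg n) (le_of_lt (hLgpos n))
  have hwnn : ∀ k : ℕ, 0 ≤ w k := by
    intro k
    apply one_div_nonneg.mpr
    apply mul_nonneg (Nat.cast_nonneg k)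
    apply Real.rpow_nonneg
    apply Real.log_nonneg
    have : (0:ℝ) ≤ (k:ℝ) := Nat.cast_nonneg k
    linarith
  -- Γ facts
  have hΓpos : ∀ n, 1 ≤ n → 0 < Γ n := by
    intro n hn
    rw [hΓ]
    apply Finset.sum_pos
    · intro i hi
      exact hpos i (Finset.mem_Icc.mp hi).1
    · exact ⟨1, Finset.mem_Icc.mpr ⟨le_refl 1, hn⟩⟩
  have hΓsucc : ∀ n, Γ (n + 1) = Γ n + γ (n + 1) := by
    intro n
    rw [hΓ, hΓ, Finset.sum_Icc_succ_top (Nat.le_add_left 1 n)]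
  have hγanti : ∀ k m, 1 ≤ k → k ≤ m → γ m ≤ γ k := by
    intro k m hk hkm
    induction m, hkm using Nat.le_induction with
    | base => exact le_rfl
    | succ m hm ih => exact le_trans (hmono m (le_trans hk hm)) ih
  have hΓlow : ∀ n : ℕ, 1 ≤ n → (n : ℝ) * γ n ≤ Γ n := by
    intro n hn
    rw [hΓ]
    calc (n:ℝ) * γ n = ∑ k ∈ Finset.Icc 1 n, γ n := by
          rw [Finset.sum_const, Nat.card_Icc]
          simp [Nat.add_sub_cancel]
      _ ≤ ∑ k ∈ Finset.Icc 1 n, γ k := by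
          apply Finset.sum_le_sum
          intro i hi
          exact hγanti i n (Finset.mem_Icc.mp hi).1 (Finset.mem_Icc.mp hi).2
  have ha_nn : ∀ n, 1 ≤ n → 0 ≤ a n := by
    intro n hn
    exact div_nonneg (le_of_lt (hpos n hn)) (le_of_lt (hΓpos n hn))
  have ha_le : ∀ n, 1 ≤ n → a n ≤ 1 / (n : ℝ) := by
    intro n hn
    have hn' : (0:ℝ) < (n:ℝ) := by exact_mod_cast hn
    rw [ha_def, div_le_div_iff₀ (hΓpos n hn) hn']
    calc γ n * (n:ℝ) = (n:ℝ) * γ n := by ring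
      _ ≤ Γ n := hΓlow n hn
      _ = 1 * Γ n := by ring
  have ha_anti : ∀ n, 1 ≤ n → a (n + 1) ≤ a n := by
    intro n hn
    apply div_le_div₀ (le_of_lt (hpos n hn)) (hmono n hn) (hΓpos n hn)
    rw [hΓsucc]
    linarith [hpos (n+1) (le_trans hn (Nat.le_succ n))]
  have ha_diff_nn : ∀ n, 1 ≤ n → 0 ≤ a n - a (n + 1) := by
    intro n hn; linarith [ha_anti n hn]
  -- difference bound for b
  have hbdiff : ∀ k : ℕ, b (k + 1) - b k ≤ 1 / Lg k := by
    intro k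
    have h1 : b (k + 1) ≤ ((k:ℝ) + 1) / Lg k := by
      have hcast : ((k + 1 : ℕ) : ℝ) = (k:ℝ) + 1 := by push_cast; ring
      show ((k + 1 : ℕ) : ℝ) / Lg (k + 1) ≤ ((k:ℝ) + 1) / Lg k
      rw [hcast]
      apply div_le_div_of_nonneg_left ?_ (hLgpos k) (hLgmono k)
      have : (0:ℝ) ≤ (k:ℝ) := Nat.cast_nonneg k
      linarith
    have h2 : ((k:ℝ) + 1) / Lg k - (k:ℝ) / Lg k = 1 / Lg k := by
      rw [div_sub_div_same]; norm_num
    have h3 : b k = (k:ℝ) / Lg k := rfl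
    linarith
  -- key product bound
  have hkey : ∀ k : ℕ, 1 ≤ k → a (k + 1) * (b (k + 1) - b k) ≤ w (k + 1) := by
    intro k hk
    rcases le_or_gt (b (k + 1)) (b k) with h | h
    · apply le_trans (mul_nonpos_of_nonneg_of_nonpos
        (ha_nn (k+1) (le_trans hk (Nat.le_succ k))) (by linarith)) (hwnn (k+1))
    · have hk1 : (0:ℝ) < (k:ℝ) + 1 := by positivity
      calc a (k + 1) * (b (k + 1) - b k)
          ≤ (1 / ((k:ℝ) + 1)) * (1 / Lg k) := by
            apply mul_le_mul ?_ (hbdiff k) (by linarith) (by positivity)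
            have := ha_le (k+1) (le_trans hk (Nat.le_succ k))
            push_cast at this ⊢
            exact this
        _ = w (k + 1) := by
            rw [hw_def, hLg_def]
            push_cast
            rw [one_div_mul_one_div]
            have he : ((k:ℝ) + 1 + 1) = (k:ℝ) + 2 := by ring
            rw [he]
  -- N from hE2
  obtain ⟨N₀, hN₀⟩ := eventually_atTop.mp (hE2.eventually_lt_const (by norm_num : (0:ℝ) < 1))
  set N := max N₀ 1 with hN_def
  have hN1 : 1 ≤ N := le_max_right _ _
  have hRb : ∀ k, N ≤ k → R k ≤ b k := by
    intro k hk
    have hk1 : 1 ≤ k := le_trans hN1 hk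
    have hkpos : (0:ℝ) < (k:ℝ) := by exact_mod_cast hk1
    have h := le_of_lt (hN₀ k (le_trans (le_max_left _ _) hk))
    rw [div_le_one hkpos] at h
    rw [hb_def, le_div_iff₀ (hLgpos k)]
    exact h
  -- induction bound for partial sums over Icc (N+1) (N+1+j)
  have hind : ∀ j : ℕ,
      (∑ k ∈ Finset.Icc (N+1) (N+1+j), (a k - a (k+1)) * b k) + a (N+1+j+1) * b (N+1+j)
        ≤ a (N+1) * b (N+1) + ∑ k ∈ Finset.Icc (N+2) (N+1+j), w k := by
    intro j
    induction j with
    | zero =>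
      simp only [Nat.add_zero]
      rw [Finset.Icc_self, Finset.sum_singleton,
        Finset.Icc_eq_empty (by omega), Finset.sum_empty]
      ring_nf
      rfl
    | succ j ih =>
      have e1 : N + 1 + (j + 1) = (N + 1 + j) + 1 := by omega
      rw [e1, Finset.sum_Icc_succ_top (by omega), Finset.sum_Icc_succ_top (by omega)]
      have hk := hkey (N + 1 + j) (by omega)
      have e2 : N + 1 + j + 1 + 1 = N + 1 + j + 2 := by omega
      nlinarith [hk, ih]
  have htsumw : ∀ s : Finset ℕ, ∑ k ∈ s, w k ≤ ∑' k, w k := by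
    intro s
    apply Summable.sum_le_tsum s (fun i _ => hwnn i) bert
  -- summability of majorant m
  set m : ℕ → ℝ := fun k => if k = 0 then 0 else (a k - a (k + 1)) * R k with hm_def
  have hmnn : ∀ k, 0 ≤ m k := by
    intro k
    rw [hm_def]
    rcases Nat.eq_zero_or_pos k with h | h
    · simp [h]
    · simp only [Nat.pos_iff_ne_zero.mp h, if_neg (Nat.pos_iff_ne_zero.mp h)]
      exact mul_nonneg (ha_diff_nn k h) (hRnn k)
  have hmsum : Summable m := by
    apply summable_of_sum_range_le (c := (∑ k ∈ Finset.range (N+1), m k)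
      + a (N+1) * b (N+1) + ∑' k, w k) hmnn
    intro M
    have htail_nn : 0 ≤ a (N+1) * b (N+1) + ∑' k, w k := by
      have : 0 ≤ ∑' k, w k := tsum_nonneg hwnn
      have := mul_nonneg (ha_nn (N+1) (by omega)) (hbnn (N+1))
      linarith
    rcases le_or_gt M (N+1) with hM | hM
    · have : ∑ k ∈ Finset.range M, m k ≤ ∑ k ∈ Finset.range (N+1), m k := by
        apply Finset.sum_le_sum_of_subset_of_nonneg
          (Finset.range_subset_range.mpr hM) (fun i _ _ => hmnn i)
      linarith
    · obtain ⟨j, hj⟩ : ∃ j, M = N + 2 + j := ⟨M - (N+2), by omega⟩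
      subst hj
      have hsplit : ∑ k ∈ Finset.range (N+2+j), m k
          = ∑ k ∈ Finset.range (N+1), m k + ∑ k ∈ Finset.Ico (N+1) (N+2+j), m k := by
        rw [Finset.range_eq_Ico,
          ← Finset.sum_Ico_consecutive m (by omega : 0 ≤ N + 1) (by omega : N + 1 ≤ N + 2 + j)]
        rw [Finset.range_eq_Ico]
      have hIcc : Finset.Ico (N+1) (N+2+j) = Finset.Icc (N+1) (N+1+j) := by
        rw [← Finset.Ico_add_one_right_eq_Icc]
        congr 1
        omega
      have hstep : ∑ k ∈ Finset.Ico (N+1) (N+2+j), m k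
          ≤ ∑ k ∈ Finset.Icc (N+1) (N+1+j), (a k - a (k+1)) * b k := by
        rw [hIcc]
        apply Finset.sum_le_sum
        intro i hi
        obtain ⟨hi1, hi2⟩ := Finset.mem_Icc.mp hi
        have hi0 : i ≠ 0 := by omega
        rw [hm_def]
        simp only [if_neg hi0]
        exact mul_le_mul_of_nonneg_left (hRb i (by omega)) (ha_diff_nn i (by omega))
      have hb_bound : ∑ k ∈ Finset.Icc (N+1) (N+1+j), (a k - a (k+1)) * b k
          ≤ a (N+1) * b (N+1) + ∑' k, w k := by
        have h1 := hind j
        have h2 := htsumw (Finset.Icc (N+2) (N+1+j))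
        have h3 : 0 ≤ a (N+1+j+1) * b (N+1+j) :=
          mul_nonneg (ha_nn _ (by omega)) (hbnn _)
        linarith
      rw [hsplit]
      linarith
  have hgsum : Summable g := by
    apply Summable.of_norm_bounded hmsum
    intro k
    rw [hg_def, hm_def]
    rcases Nat.eq_zero_or_pos k with h | h
    · simp [h]
    · have h0 := Nat.pos_iff_ne_zero.mp h
      simp only [if_neg h0]
      rw [Real.norm_eq_abs, abs_mul, abs_of_nonneg (ha_diff_nn k h)]
      exact mul_le_mul_of_nonneg_left (hSR k) (ha_diff_nn k h)
  -- a n * S n → 0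
  have hRn0 : Tendsto (fun n : ℕ => R n / n) atTop (nhds 0) := by
    have h0 : Tendsto (fun n : ℕ => R n * Real.log ((n:ℝ) + 2) ^ (1 + ε) / (n:ℝ)
        * (1 / Real.log 2 ^ (1 + ε))) atTop (nhds 0) := by
      have := hE2.mul_const (1 / Real.log 2 ^ (1 + ε))
      rw [zero_mul] at this
      exact this
    apply squeeze_zero' (Eventually.of_forall ?_) (Eventually.of_forall ?_) h0
    · intro n
      exact div_nonneg (hRnn n) (Nat.cast_nonneg n)
    · intro n
      have hnum : 0 ≤ R n * Lg n / n :=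
        div_nonneg (mul_nonneg (hRnn n) (le_of_lt (hLgpos n))) (Nat.cast_nonneg n)
      have hLg2' := hLg2 n
      have hlgp : (0:ℝ) < Real.log 2 ^ (1 + ε) := Real.rpow_pos_of_pos hlog2 _
      calc R n / (n:ℝ) = (R n * Lg n / n) * (1 / Lg n) := by
            rw [div_mul_div_comm, mul_one, mul_div_mul_right _ _ (ne_of_gt (hLgpos n))]
        _ ≤ (R n * Lg n / n) * (1 / Real.log 2 ^ (1 + ε)) := by
            apply mul_le_mul_of_nonneg_left ?_ hnum
            exact one_div_le_one_div_of_le hlgp hLg2'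
  have haS0 : Tendsto (fun n : ℕ => a n * S n) atTop (nhds 0) := by
    rw [tendsto_zero_iff_abs_tendsto_zero]
    apply squeeze_zero' (Eventually.of_forall (fun n => abs_nonneg _)) ?_ hRn0
    filter_upwards [eventually_ge_atTop 1] with n hn
    rw [abs_mul, abs_of_nonneg (ha_nn n hn)]
    calc a n * |S n| ≤ (1 / (n:ℝ)) * R n :=
          mul_le_mul (ha_le n hn) (hSR n) (abs_nonneg _) (by positivity)
      _ = R n / n := by ring
  -- Abel identity
  have hid : ∀ n : ℕ, ∑ k ∈ Finset.Icc 1 (n+1), a k * x k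
      = a (n+1) * S (n+1) + ∑ k ∈ Finset.range (n+1), g k := by
    intro n
    induction n with
    | zero =>
      simp [hS_def, hg_def]
    | succ n ih =>
      have hS2 : S (n+1+1) = S (n+1) + x (n+1+1) :=
        Finset.sum_Icc_succ_top (by omega) x
      have hgs : g (n+1) = (a (n+1) - a (n+1+1)) * S (n+1) := by
        simp [hg_def]
      rw [Finset.sum_Icc_succ_top (by omega), ih, Finset.sum_range_succ g (n+1), hS2, hgs]
      ring
  -- conclude
  refine ⟨0 + ∑' k, g k, ?_⟩
  rw [← tendsto_add_atTop_iff_nat 1]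
  have h2 : Tendsto (fun n : ℕ => ∑ k ∈ Finset.range (n+1), g k) atTop (nhds (∑' k, g k)) :=
    (hgsum.hasSum.tendsto_sum_nat).comp (tendsto_add_atTop_nat 1)
  have h1 : Tendsto (fun n : ℕ => a (n+1) * S (n+1)) atTop (nhds 0) :=
    haS0.comp (tendsto_add_atTop_nat 1)
  have := h1.add h2
  apply Tendsto.congr ?_ this
  intro n
  exact (hid n).symm


theorem stmt_14 (γ Γ : ℕ → ℝ) (ηA ηB : ℕ → ℝ) (θA θB : ℝ) (R : ℕ → ℝ) (ε C : ℝ)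
    (hΓ : ∀ n, Γ n = ∑ k ∈ Finset.Icc 1 n, γ k)
    (hpos : ∀ n, 1 ≤ n → 0 < γ n) (hlt : ∀ n, 1 ≤ n → γ n < 1)
    (hmono : ∀ n, 1 ≤ n → γ (n + 1) ≤ γ n)
    (htend : Tendsto Γ atTop atTop)
    (hC : 0 < C) (hO : ∀ n, 1 ≤ n → γ n ≤ C * Γ n * Real.exp (-θB * Γ n))
    (hηA : ∀ k, ηA k = 0 ∨ ηA k = 1) (hηB : ∀ k, ηB k = 0 ∨ ηB k = 1)
    (hθA : θA ∈ Set.Ioo (0:ℝ) 1) (hθB : θB ∈ Set.Ioo (0:ℝ) 1)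
    (hR : ∀ n, R n = max |∑ i ∈ Finset.Icc 1 n, (ηA i - θA)|
                         |∑ i ∈ Finset.Icc 1 n, (ηB i - θB)|)
    (hε : 0 < ε)
    (hE2 : Tendsto (fun n : ℕ => R n * (Real.log (n + 2)) ^ (1 + ε) / n) atTop (nhds 0)) :
    (∃ LA : ℝ, Tendsto (fun n => ∑ k ∈ Finset.Icc 1 n, γ k / Γ k * (ηA k - θA)) atTop (nhds LA)) ∧
    (∃ LB : ℝ, Tendsto (fun n => ∑ k ∈ Finset.Icc 1 n, γ k / Γ k * (ηB k - θB)) atTop (nhds LB)) := by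
  have hRnn : ∀ n, 0 ≤ R n := by
    intro n
    rw [hR]
    exact le_trans (abs_nonneg _) (le_max_left _ _)
  constructor
  · apply key_conv γ Γ (fun k => ηA k - θA) R ε hε hΓ hpos hmono hRnn ?_ hE2
    intro n
    rw [hR]
    exact le_max_left _ _
  · apply key_conv γ Γ (fun k => ηB k - θB) R ε hε hΓ hpos hmono hRnn ?_ hE2
    intro n
    rw [hR]
    exact le_max_right _ _
end

section
/- Lemma (1sumest): assume (γ_n) nonincreasing in (0,1) and φ nondecreasing concave on [k_0,∞). Define Ψ_n = Σ_{k=n+1}^∞ (γ_k/S_{k-1})(η_{A,k} − η_{B,k} − (θ_A − θ_B)) and β_n = sup_{k≥n} R_k/φ(k) where R_k = max_ℓ |Σ_{i=1}^k (η_{ℓ,i} − θ_ℓ)|. Then for all n ≥ k_0, |Ψ_n| ≤ (2β_n/S_{n-1})(φ'(n) + 2γ_n φ(n)), with φ'(n) = φ(n) − φ(n−1). -/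
open Finset Filter

theorem stmt_16 (γ : ℕ → ℝ) (S : ℕ → ℝ) (ηA ηB : ℕ → ℝ) (θA θB : ℝ)
    (φ : ℕ → ℝ) (R β Ψ : ℕ → ℝ) (k₀ : ℕ)
    (hpos : ∀ n, 1 ≤ n → 0 < γ n) (hlt : ∀ n, 1 ≤ n → γ n < 1)
    (hmono : ∀ n, 1 ≤ n → γ (n + 1) ≤ γ n)
    (hS : ∀ n, S n = (∏ k ∈ Finset.Icc 1 n, (1 - γ k))⁻¹)
    (hηA : ∀ k, ηA k = 0 ∨ ηA k = 1) (hηB : ∀ k, ηB k = 0 ∨ ηB k = 1)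
    (hθA : θA ∈ Set.Ioo (0:ℝ) 1) (hθB : θB ∈ Set.Ioo (0:ℝ) 1)
    (hφpos : ∀ k, 0 ≤ φ k)
    (hφmono : ∀ k, k₀ ≤ k → φ k ≤ φ (k + 1))
    (hφconc : ∀ k, k₀ ≤ k → φ (k + 1) - φ k ≤ φ k - φ (k - 1))
    (hR : ∀ n, R n = max |∑ i ∈ Finset.Icc 1 n, (ηA i - θA)|
                         |∑ i ∈ Finset.Icc 1 n, (ηB i - θB)|)
    (hβ : ∀ n k, n ≤ k → R k ≤ β n * φ k)
    (hΨ : ∀ n, Ψ n = ∑' k : ℕ,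
      γ (n + 1 + k) / S (n + k) * (ηA (n + 1 + k) - ηB (n + 1 + k) - (θA - θB))) :
    ∀ n, k₀ ≤ n → 1 ≤ n →
      |Ψ n| ≤ 2 * β n / S (n - 1) * ((φ n - φ (n - 1)) + 2 * γ n * φ n) := by
  intro n hk0 hn1
  set b : ℕ → ℝ := fun m => ∏ k ∈ Finset.Icc 1 m, (1 - γ k) with hbdef
  have hbpos : ∀ m, 0 < b m := by
    intro m
    simp only [hbdef]
    apply Finset.prod_pos
    intro i hi
    have h1 : 1 ≤ i := (Finset.mem_Icc.mp hi).1
    linarith [hlt i h1]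
  have hbsucc : ∀ m, b (m + 1) = b m * (1 - γ (m + 1)) := by
    intro m
    simp only [hbdef]
    exact Finset.prod_Icc_succ_top (Nat.le_add_left 1 m) _
  have hbstep : ∀ m, b (m + 1) ≤ b m := by
    intro m
    rw [hbsucc m]
    nlinarith [hbpos m, hpos (m+1) (Nat.le_add_left 1 m)]
  have hbanti : Antitone b := antitone_nat_of_succ_le hbstep
  have hSb : ∀ m, S m = (b m)⁻¹ := by
    intro m; rw [hS m]
  have hγanti : ∀ i j, 1 ≤ i → i ≤ j → γ j ≤ γ i := by
    intro i j hi hij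
    induction j, hij using Nat.le_induction with
    | base => exact le_refl _
    | succ j hij ih => exact le_trans (hmono j (le_trans hi hij)) ih
  set SA : ℕ → ℝ := fun m => ∑ i ∈ Finset.Icc 1 m, (ηA i - θA) with hSAdef
  set SB : ℕ → ℝ := fun m => ∑ i ∈ Finset.Icc 1 m, (ηB i - θB) with hSBdef
  set T : ℕ → ℝ := fun m => SA m - SB m with hTdef
  have hSAsucc : ∀ m, SA (m + 1) = SA m + (ηA (m + 1) - θA) := by
    intro m
    simp only [hSAdef]
    exact Finset.sum_Icc_succ_top (Nat.le_add_left 1 m) _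
  have hSBsucc : ∀ m, SB (m + 1) = SB m + (ηB (m + 1) - θB) := by
    intro m
    simp only [hSBdef]
    exact Finset.sum_Icc_succ_top (Nat.le_add_left 1 m) _
  have hTsucc : ∀ m, T (m + 1) - T m = (ηA (m + 1) - θA) - (ηB (m + 1) - θB) := by
    intro m
    simp only [hTdef]
    rw [hSAsucc m, hSBsucc m]; ring
  have hRval : ∀ m, R m = max |SA m| |SB m| := by
    intro m; rw [hR m]
  have hTbound : ∀ j, n ≤ j → |T j| ≤ 2 * (β n * φ j) := by
    intro j hj
    have h1 : |SA j| ≤ R j := by rw [hRval j]; exact le_max_left _ _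
    have h2 : |SB j| ≤ R j := by rw [hRval j]; exact le_max_right _ _
    have h3 : R j ≤ β n * φ j := hβ n j hj
    have h4 : |T j| ≤ |SA j| + |SB j| := abs_sub _ _
    linarith
  set A : ℕ → ℝ := fun k => b (n + k) - b (n + k + 1) with hAdef
  have hAval : ∀ k, A k = γ (n + k + 1) * b (n + k) := by
    intro k
    simp only [hAdef]
    rw [hbsucc (n + k)]; ring
  have hApos : ∀ k, 0 ≤ A k := by
    intro k
    rw [hAval k]
    exact mul_nonneg (hpos _ (Nat.le_add_left 1 _)).le (hbpos _).le
  have hAmono : ∀ k, A (k + 1) ≤ A k := by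
    intro k
    rw [hAval k, hAval (k+1)]
    have e : n + (k + 1) = n + k + 1 := rfl
    rw [e]
    apply mul_le_mul (hγanti (n+k+1) (n+k+1+1) (Nat.le_add_left 1 _) (Nat.le_succ _))
      (hbstep (n+k)) (hbpos _).le (hpos _ (Nat.le_add_left 1 _)).le
  set f : ℕ → ℝ := fun k => γ (n + 1 + k) / S (n + k) * (ηA (n + 1 + k) - ηB (n + 1 + k) - (θA - θB)) with hfdef
  have hΨn : Ψ n = ∑' k, f k := hΨ n
  have hfval : ∀ k, f k = A k * (T (n + k + 1) - T (n + k)) := by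
    intro k
    have e : n + 1 + k = n + k + 1 := by omega
    simp only [hfdef, e]
    rw [hSb (n + k), div_eq_mul_inv, inv_inv, hTsucc (n + k), hAval k]
    ring
  rcases lt_or_ge (β n) 0 with hβneg | hβ0
  · -- degenerate case: β n < 0 forces everything to vanish
    have hRnonneg : ∀ k, 0 ≤ R k := by
      intro k
      rw [hRval k]
      exact le_max_of_le_left (abs_nonneg _)
    have hφ0 : ∀ k, n ≤ k → φ k = 0 := by
      intro k hk
      by_contra h
      have hφk : 0 < φ k := lt_of_le_of_ne (hφpos k) (Ne.symm h)
      nlinarith [hβ n k hk, hRnonneg k]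
    have hR0 : ∀ k, n ≤ k → R k = 0 := by
      intro k hk
      have h1 := hβ n k hk
      rw [hφ0 k hk] at h1
      linarith [hRnonneg k]
    have hSA0 : ∀ k, n ≤ k → SA k = 0 := by
      intro k hk
      have h : |SA k| ≤ R k := by rw [hRval k]; exact le_max_left _ _
      rw [hR0 k hk] at h
      exact abs_eq_zero.mp (le_antisymm h (abs_nonneg _))
    have hSB0 : ∀ k, n ≤ k → SB k = 0 := by
      intro k hk
      have h : |SB k| ≤ R k := by rw [hRval k]; exact le_max_right _ _
      rw [hR0 k hk] at h
      exact abs_eq_zero.mp (le_antisymm h (abs_nonneg _))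
    have hf0 : ∀ k, f k = 0 := by
      intro k
      rw [hfval k]
      have h1 : T (n + k + 1) = 0 := by
        simp only [hTdef]; rw [hSA0 _ (by omega), hSB0 _ (by omega)]; ring
      have h2 : T (n + k) = 0 := by
        simp only [hTdef]; rw [hSA0 _ (by omega), hSB0 _ (by omega)]; ring
      rw [h1, h2]; ring
    have hΨ0 : Ψ n = 0 := by
      rw [hΨn]
      simp only [hf0]
      exact tsum_zero
    rw [hΨ0, abs_zero, hSb (n-1), div_eq_mul_inv, inv_inv, hφ0 n le_rfl]
    nlinarith [hφpos (n-1), hbpos (n-1), mul_nonneg (mul_nonneg (by linarith : (0:ℝ) ≤ -(2 * β n)) (hbpos (n-1)).le) (hφpos (n-1))]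
  · -- main case : 0 ≤ β n
    have hD2 : ∀ j, |ηA j - ηB j - (θA - θB)| ≤ 2 := by
      intro j
      obtain ⟨hA0, hA1⟩ := hθA
      obtain ⟨hB0, hB1⟩ := hθB
      rw [abs_le]
      rcases hηA j with h1 | h1 <;> rcases hηB j with h2 | h2 <;>
        rw [h1, h2] <;> constructor <;> linarith
    have hsumrange : ∀ N, ∑ k ∈ Finset.range N, A k = b n - b (n + N) := by
      intro N
      exact (Finset.sum_range_sub' (fun i => b (n + i)) N).trans (by norm_num)
    have hsumA : Summable A :=
      summable_of_sum_range_le (c := b n) hApos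
        (fun N => by rw [hsumrange N]; linarith [hbpos (n + N)])
    have hAtend : Tendsto A atTop (nhds 0) := by
      have hbdd : BddBelow (Set.range b) := by
        refine ⟨0, ?_⟩
        rintro x ⟨m, rfl⟩
        exact (hbpos m).le
      have hL := tendsto_atTop_ciInf hbanti hbdd
      have h2 := hL.sub (hL.comp (tendsto_add_atTop_nat 1))
      rw [sub_self] at h2
      have h3 := h2.comp (tendsto_add_atTop_nat n)
      apply h3.congr
      intro N
      simp only [Function.comp_apply, hAdef]
      rw [Nat.add_comm N n]
    have hAbel : ∀ N, ∑ k ∈ Finset.range (N + 1), f k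
        = A N * T (n + N + 1) - A 0 * T n
          + ∑ k ∈ Finset.range N, (A k - A (k + 1)) * T (n + k + 1) := by
      intro N
      induction N with
      | zero => simp [hfval]; ring
      | succ N ih =>
        rw [Finset.sum_range_succ, ih, hfval (N + 1), Finset.sum_range_succ]
        have e : n + (N + 1) = n + N + 1 := by omega
        rw [e]
        ring
    have hφchain : ∀ k, φ (n + k + 1) - φ (n + k) ≤ φ (n + 1) - φ n := by
      intro k
      induction k with
      | zero => simp
      | succ k ih =>
        have h := hφconc (n + k + 1) (by omega)
        have e : n + k + 1 - 1 = n + k := by omega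
        rw [e] at h
        have e2 : n + (k + 1) = n + k + 1 := by omega
        rw [e2]
        linarith
    have hφ'pos : 0 ≤ φ (n + 1) - φ n := by linarith [hφmono n hk0]
    have hS2 : ∀ N, |∑ k ∈ Finset.range N, (A k - A (k + 1)) * T (n + k + 1)|
        ≤ 2 * (β n * (A 0 * φ n - A N * φ (n + N) + (φ (n + 1) - φ n) * b n)) := by
      intro N
      calc |∑ k ∈ Finset.range N, (A k - A (k + 1)) * T (n + k + 1)|
          ≤ ∑ k ∈ Finset.range N, |(A k - A (k + 1)) * T (n + k + 1)| :=
            Finset.abs_sum_le_sum_abs _ _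
        _ ≤ ∑ k ∈ Finset.range N, (A k - A (k + 1)) * (2 * (β n * φ (n + k + 1))) := by
            apply Finset.sum_le_sum
            intro k _
            rw [abs_mul, abs_of_nonneg (by linarith [hAmono k] : (0:ℝ) ≤ A k - A (k + 1))]
            exact mul_le_mul_of_nonneg_left (hTbound (n + k + 1) (by omega))
              (by linarith [hAmono k])
        _ ≤ ∑ k ∈ Finset.range N, ((A k * (2 * (β n * φ (n + k)))
              - A (k + 1) * (2 * (β n * φ (n + (k + 1)))))
              + A k * (2 * (β n * (φ (n + 1) - φ n)))) := by
            apply Finset.sum_le_sum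
            intro k _
            have h := mul_le_mul_of_nonneg_left (hφchain k) (mul_nonneg (hApos k) hβ0)
            have e2 : n + (k + 1) = n + k + 1 := by omega
            rw [e2]
            nlinarith [h]
        _ = (A 0 * (2 * (β n * φ (n + 0))) - A N * (2 * (β n * φ (n + N))))
              + (∑ k ∈ Finset.range N, A k) * (2 * (β n * (φ (n + 1) - φ n))) := by
            rw [Finset.sum_add_distrib,
              Finset.sum_range_sub' (fun i => A i * (2 * (β n * φ (n + i)))) N,
              ← Finset.sum_mul]
        _ ≤ 2 * (β n * (A 0 * φ n - A N * φ (n + N) + (φ (n + 1) - φ n) * b n)) := by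
            rw [hsumrange N]
            simp only [Nat.add_zero]
            have h2 : 0 ≤ 2 * (β n * (φ (n + 1) - φ n)) := by positivity
            nlinarith [mul_nonneg (hbpos (n + N)).le h2]
    have hPbound : ∀ N, |∑ k ∈ Finset.range (N + 1), f k|
        ≤ 2 * β n * ((φ (n + 1) - φ n) * A N)
          + 2 * (β n * (2 * (A 0 * φ n) + (φ (n + 1) - φ n) * b n)) := by
      intro N
      have h1 : |A N * T (n + N + 1)| ≤ A N * (2 * (β n * φ (n + N + 1))) := by
        rw [abs_mul, abs_of_nonneg (hApos N)]
        exact mul_le_mul_of_nonneg_left (hTbound _ (by omega)) (hApos N)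
      have h2 : |A 0 * T n| ≤ A 0 * (2 * (β n * φ n)) := by
        rw [abs_mul, abs_of_nonneg (hApos 0)]
        exact mul_le_mul_of_nonneg_left (hTbound n le_rfl) (hApos 0)
      have h3 := hS2 N
      have h4 : |∑ k ∈ Finset.range (N + 1), f k|
          ≤ |A N * T (n + N + 1)| + |A 0 * T n|
            + |∑ k ∈ Finset.range N, (A k - A (k + 1)) * T (n + k + 1)| := by
        rw [hAbel N]
        calc |A N * T (n + N + 1) - A 0 * T n
              + ∑ k ∈ Finset.range N, (A k - A (k + 1)) * T (n + k + 1)|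
            ≤ |A N * T (n + N + 1) - A 0 * T n|
              + |∑ k ∈ Finset.range N, (A k - A (k + 1)) * T (n + k + 1)| := abs_add_le _ _
          _ ≤ _ := by linarith [abs_sub (A N * T (n + N + 1)) (A 0 * T n)]
      have h5 := mul_le_mul_of_nonneg_left (hφchain N) (mul_nonneg (hApos N) hβ0)
      nlinarith [h1, h2, h3, h4, h5]
    have hf2 : ∀ k, |f k| ≤ 2 * A k := by
      intro k
      rw [hfval k, abs_mul, abs_of_nonneg (hApos k)]
      have h2 : |T (n + k + 1) - T (n + k)| ≤ 2 := by
        rw [hTsucc (n + k)]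
        have h := hD2 (n + k + 1)
        calc |ηA (n + k + 1) - θA - (ηB (n + k + 1) - θB)|
            = |ηA (n + k + 1) - ηB (n + k + 1) - (θA - θB)| := by congr 1; ring
          _ ≤ 2 := h
      nlinarith [hApos k, abs_nonneg (T (n + k + 1) - T (n + k))]
    have hsumf : Summable f := by
      apply Summable.of_abs
      apply summable_of_sum_range_le (fun k => abs_nonneg _) (c := 2 * b n)
      intro N
      calc ∑ k ∈ Finset.range N, |f k|
          ≤ ∑ k ∈ Finset.range N, 2 * A k := Finset.sum_le_sum (fun k _ => hf2 k)
        _ = 2 * (b n - b (n + N)) := by rw [← Finset.mul_sum, hsumrange N]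
        _ ≤ 2 * b n := by nlinarith [hbpos (n + N)]
    have hHasSum : HasSum f (Ψ n) := by rw [hΨn]; exact hsumf.hasSum
    have htend : Tendsto (fun N => |∑ k ∈ Finset.range (N + 1), f k|) atTop (nhds |Ψ n|) :=
      (hHasSum.tendsto_sum_nat.comp (tendsto_add_atTop_nat 1)).abs
    have hgtend : Tendsto (fun N => 2 * β n * ((φ (n + 1) - φ n) * A N)
        + 2 * (β n * (2 * (A 0 * φ n) + (φ (n + 1) - φ n) * b n))) atTop
        (nhds (2 * (β n * (2 * (A 0 * φ n) + (φ (n + 1) - φ n) * b n)))) := by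
      have h := (((hAtend.const_mul (φ (n + 1) - φ n)).const_mul (2 * β n)).add_const
        (2 * (β n * (2 * (A 0 * φ n) + (φ (n + 1) - φ n) * b n))))
      simpa using h
    have hfinal : |Ψ n| ≤ 2 * (β n * (2 * (A 0 * φ n) + (φ (n + 1) - φ n) * b n)) :=
      le_of_tendsto_of_tendsto' htend hgtend hPbound
    rw [hSb (n - 1), div_eq_mul_inv, inv_inv]
    refine hfinal.trans ?_
    have hbn1 : b n ≤ b (n - 1) := by
      have e : n = (n - 1) + 1 := by omega
      calc b n = b ((n - 1) + 1) := by rw [← e]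
        _ ≤ b (n - 1) := hbstep (n - 1)
    have hA0le : A 0 ≤ γ n * b (n - 1) := by
      rw [hAval 0]
      simp only [Nat.add_zero]
      exact mul_le_mul (hmono n hn1) hbn1 (hbpos n).le (hpos n hn1).le
    have hcc := hφconc n hk0
    have h2 : (φ (n + 1) - φ n) * b n ≤ (φ n - φ (n - 1)) * b (n - 1) := by
      apply mul_le_mul hcc hbn1 (hbpos n).le (by linarith)
    have h3 := mul_le_mul_of_nonneg_left
      (mul_le_mul_of_nonneg_right hA0le (hφpos n)) hβ0
    have h4 := mul_le_mul_of_nonneg_left h2 hβ0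
    nlinarith [h3, h4]
end

section
/- Lemma (2sumest): under the assumptions of Lemma 1sumest, setting Λ_n = Σ_{k=1}^n γ_k f(X_{k−1})(η_{A,k}−η_{B,k}−(θ_A−θ_B)) with f(x)=x(1−x) and X in [0,1] evolving by the Narendra rule, and R'_n = 2 sup_{k≥n} β_k(φ'(k)+2γ_kφ(k)) / (1−γ_n), one has for all n ≥ m ≥ k_0: |Λ_n − Λ_m| ≤ R'_m (Σ_{k=m+1}^n γ_k f(X_{k−1}) + 2 f(X_n)). -/
open Finset Filter

set_option maxHeartbeats 2000000 in

/-- `U k = true` means arm A is played at time `k`.  `R' n` is assumed to be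
`2 sup_{k ≥ n} β k (φ'(k) + 2 γ k φ(k)) / (1 - γ n)`: we state this through the
upper-bound property. -/
theorem stmt_17 (γ : ℕ → ℝ) (S : ℕ → ℝ) (X : ℕ → ℝ) (U : ℕ → Bool)
    (ηA ηB : ℕ → ℝ) (θA θB : ℝ) (f : ℝ → ℝ)
    (φ : ℕ → ℝ) (R β R' Λ : ℕ → ℝ) (k₀ : ℕ)
    (hf : ∀ y, f y = y * (1 - y))
    (hpos : ∀ n, 1 ≤ n → 0 < γ n) (hlt : ∀ n, 1 ≤ n → γ n < 1)
    (hmono : ∀ n, 1 ≤ n → γ (n + 1) ≤ γ n)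
    (hS : ∀ n, S n = (∏ k ∈ Finset.Icc 1 n, (1 - γ k))⁻¹)
    (hηA : ∀ k, ηA k = 0 ∨ ηA k = 1) (hηB : ∀ k, ηB k = 0 ∨ ηB k = 1)
    (hθA : θA ∈ Set.Ioo (0:ℝ) 1) (hθB : θB ∈ Set.Ioo (0:ℝ) 1)
    (hX0 : 0 < X 0) (hX1 : X 0 < 1)
    (hupdate : ∀ n : ℕ,
      X (n + 1) = if U (n + 1) = true ∧ ηA (n + 1) = 1 then X n + γ (n + 1) * (1 - X n)
        else if U (n + 1) = false ∧ ηB (n + 1) = 1 then (1 - γ (n + 1)) * X n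
        else X n)
    (hφpos : ∀ k, 0 ≤ φ k)
    (hφmono : ∀ k, k₀ ≤ k → φ k ≤ φ (k + 1))
    (hφconc : ∀ k, k₀ ≤ k → φ (k + 1) - φ k ≤ φ k - φ (k - 1))
    (hR : ∀ n, R n = max |∑ i ∈ Finset.Icc 1 n, (ηA i - θA)|
                         |∑ i ∈ Finset.Icc 1 n, (ηB i - θB)|)
    (hβ : ∀ n k, n ≤ k → R k ≤ β n * φ k) (hβpos : ∀ n, 0 ≤ β n)
    (hR' : ∀ n k, n ≤ k →
      2 * (β k * ((φ k - φ (k - 1)) + 2 * γ k * φ k)) / (1 - γ n) ≤ R' n)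
    (hΛ : ∀ n, Λ n = ∑ k ∈ Finset.Icc 1 n, γ k * f (X (k - 1)) * (ηA k - ηB k - (θA - θB))) :
    ∀ m n, k₀ ≤ m → 1 ≤ m → m ≤ n →
      |Λ n - Λ m| ≤ R' m * ((∑ k ∈ Finset.Icc (m + 1) n, γ k * f (X (k - 1))) + 2 * f (X n)) := by
  intro m n hk0m hm1 hmn
  -- basic facts about γ
  have hγ0 : ∀ k : ℕ, 1 ≤ k → 0 ≤ γ k := fun k hk => (hpos k hk).le
  have hγanti : ∀ a b : ℕ, 1 ≤ a → a ≤ b → γ b ≤ γ a := by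
    intro a b ha hab
    induction b, hab using Nat.le_induction with
    | base => exact le_rfl
    | succ k hk ih => exact (hmono k (ha.trans hk)).trans ih
  have h1γm : 0 < 1 - γ m := by have := hlt m hm1; linarith
  -- X stays in [0,1]
  have hX01 : ∀ k, 0 ≤ X k ∧ X k ≤ 1 := by
    intro k; induction k with
    | zero => exact ⟨hX0.le, hX1.le⟩
    | succ j ih =>
      have h1 : 0 < γ (j+1) := hpos _ (Nat.le_add_left 1 j)
      have h2 : γ (j+1) < 1 := hlt _ (Nat.le_add_left 1 j)
      rw [hupdate j]
      split_ifs with hA hB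
      · constructor <;> nlinarith [ih.1, ih.2]
      · constructor <;> nlinarith [ih.1, ih.2]
      · exact ih
  have hF0 : ∀ k, 0 ≤ f (X k) := by
    intro k; rw [hf]; nlinarith [(hX01 k).1, (hX01 k).2]
  -- growth of S_k f(X_k):  f(X_{k+1}) ≥ (1-γ_{k+1}) f(X_k)
  have hgrow : ∀ k : ℕ, (1 - γ (k+1)) * f (X k) ≤ f (X (k+1)) := by
    intro k
    have h1 : 0 < γ (k+1) := hpos _ (Nat.le_add_left 1 k)
    have h2 : γ (k+1) < 1 := hlt _ (Nat.le_add_left 1 k)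
    have hx := hX01 k
    rw [hupdate k]
    simp only [hf]
    split_ifs with hA hB
    · nlinarith [mul_nonneg (mul_nonneg h1.le (show (0:ℝ) ≤ 1 - γ (k+1) by linarith))
        (sq_nonneg (1 - X k)), hx.1, hx.2]
    · nlinarith [mul_nonneg (mul_nonneg h1.le (show (0:ℝ) ≤ 1 - γ (k+1) by linarith))
        (sq_nonneg (X k)), hx.1, hx.2]
    · nlinarith [mul_nonneg h1.le (mul_nonneg hx.1 (show (0:ℝ) ≤ 1 - X k by linarith))]
  -- the running minimum of β on [m, k]
  obtain ⟨βt, hβt_def⟩ : ∃ g : ℕ → ℝ, g = fun k =>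
      if h : m ≤ k then (Finset.Icc m k).inf' (Finset.nonempty_Icc.2 h) β else 0 := ⟨_, rfl⟩
  have hβtmem : ∀ k, m ≤ k → ∃ j, m ≤ j ∧ j ≤ k ∧ βt k = β j := by
    intro k hk
    simp only [hβt_def]
    rw [dif_pos hk]
    obtain ⟨j, hj, hje⟩ := Finset.exists_mem_eq_inf' (Finset.nonempty_Icc.2 hk) β
    exact ⟨j, (Finset.mem_Icc.1 hj).1, (Finset.mem_Icc.1 hj).2, hje⟩
  have hβt0 : ∀ k, m ≤ k → 0 ≤ βt k := by
    intro k hk; obtain ⟨j, _, _, he⟩ := hβtmem k hk; rw [he]; exact hβpos j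
  have hβtle : ∀ k, m ≤ k → βt k ≤ β k := by
    intro k hk; simp only [hβt_def]; rw [dif_pos hk]
    exact Finset.inf'_le β (Finset.mem_Icc.2 ⟨hk, le_rfl⟩)
  have hβtmono : ∀ k, m ≤ k → βt (k+1) ≤ βt k := by
    intro k hk; simp only [hβt_def]
    rw [dif_pos hk, dif_pos (hk.trans (Nat.le_succ k))]
    apply Finset.inf'_mono
    exact Finset.Icc_subset_Icc_right (Nat.le_succ k)
  have hβtR : ∀ k, m ≤ k → R k ≤ βt k * φ k := by
    intro k hk; obtain ⟨j, _, hj2, he⟩ := hβtmem k hk; rw [he]; exact hβ j k hj2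
  -- φ increments are nonnegative and nonincreasing from m on
  have hφd0 : ∀ k, m ≤ k → 0 ≤ φ k - φ (k-1) := by
    intro k hk
    rcases Nat.eq_or_lt_of_le hk with heq | hlt'
    · rw [← heq]
      have h1 := hφconc m hk0m
      have h2 := hφmono m hk0m
      linarith
    · obtain ⟨j, rfl⟩ : ∃ j, k = j + 1 := ⟨k - 1, by omega⟩
      have hj : k₀ ≤ j := by omega
      have := hφmono j hj
      simp only [Nat.add_sub_cancel]
      linarith
  -- main auxiliary sequences
  obtain ⟨c, hc_def⟩ : ∃ g : ℕ → ℝ, g = fun k => γ k * f (X (k - 1)) := ⟨_, rfl⟩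
  obtain ⟨M, hM_def⟩ : ∃ g : ℕ → ℝ, g = fun k =>
      (∑ i ∈ Finset.Icc 1 k, (ηA i - θA)) - (∑ i ∈ Finset.Icc 1 k, (ηB i - θB)) := ⟨_, rfl⟩
  obtain ⟨w, hw_def⟩ : ∃ g : ℕ → ℝ, g = fun k => 2 * (βt k * φ k) := ⟨_, rfl⟩
  obtain ⟨s, hs_def⟩ : ∃ g : ℕ → ℝ, g = fun k => 2 * (βt k * (φ k - φ (k-1))) := ⟨_, rfl⟩
  obtain ⟨D, hD_def⟩ : ∃ d : ℝ, d = R' m * (1 - γ m) := ⟨_, rfl⟩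
  obtain ⟨p, hp_def⟩ : ∃ g : ℕ → ℝ, g = fun k =>
      γ (k+1) * (f (X k) - (1 - γ k) * f (X (k-1))) := ⟨_, rfl⟩
  have hs0 : ∀ k, m ≤ k → 0 ≤ s k := by
    intro k hk; simp only [hs_def]
    have := hβt0 k hk; have := hφd0 k hk; nlinarith
  have hw0 : ∀ k, m ≤ k → 0 ≤ w k := by
    intro k hk; simp only [hw_def]
    have := hβt0 k hk; have := hφpos k; nlinarith
  have hsu : ∀ k, m ≤ k → s k + 2 * γ k * w k ≤ D := by
    intro k hk
    have hk1 : 1 ≤ k := hm1.trans hk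
    have hd := hR' m k hk
    rw [div_le_iff₀ h1γm] at hd
    have e1 : βt k * (φ k - φ (k-1)) ≤ β k * (φ k - φ (k-1)) :=
      mul_le_mul_of_nonneg_right (hβtle k hk) (hφd0 k hk)
    have e3 : γ k * (βt k * φ k) ≤ γ k * (β k * φ k) := by
      apply mul_le_mul_of_nonneg_left _ (hγ0 k hk1)
      exact mul_le_mul_of_nonneg_right (hβtle k hk) (hφpos k)
    simp only [hs_def, hw_def, hD_def]
    nlinarith [e1, e3, hd]
  have hsmono : ∀ k, m ≤ k → s (k+1) ≤ s k := by
    intro k hk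
    have h1 : 0 ≤ φ (k+1) - φ k := by
      have := hφd0 (k+1) (hk.trans (Nat.le_succ k)); simpa using this
    have h2 : φ (k+1) - φ k ≤ φ k - φ (k-1) := hφconc k (hk0m.trans hk)
    have h3 := hβtmono k hk
    have h4 := hβt0 k hk
    have h5 := hβt0 (k+1) (hk.trans (Nat.le_succ k))
    simp only [hs_def, Nat.add_sub_cancel]
    nlinarith [mul_le_mul_of_nonneg_right h3 h1, mul_le_mul_of_nonneg_left h2 h4]
  have hws : ∀ k, m ≤ k → w (k+1) - w k ≤ s (k+1) := by
    intro k hk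
    have h3 := hβtmono k hk
    simp only [hw_def, hs_def, Nat.add_sub_cancel]
    nlinarith [mul_le_mul_of_nonneg_right h3 (hφpos k)]
  -- |M k| ≤ w k
  have hMw : ∀ k, m ≤ k → |M k| ≤ w k := by
    intro k hk
    have h1 : |∑ i ∈ Finset.Icc 1 k, (ηA i - θA)| ≤ R k := by
      rw [hR]; exact le_max_left _ _
    have h2 : |∑ i ∈ Finset.Icc 1 k, (ηB i - θB)| ≤ R k := by
      rw [hR]; exact le_max_right _ _
    have h3 : R k ≤ βt k * φ k := hβtR k hk
    have h4 : |M k| ≤ |∑ i ∈ Finset.Icc 1 k, (ηA i - θA)| + |∑ i ∈ Finset.Icc 1 k, (ηB i - θB)| := by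
      simp only [hM_def]
      exact abs_sub _ _
    simp only [hw_def]
    linarith
  have hMstep : ∀ k : ℕ, M (k+1) = M k + (ηA (k+1) - ηB (k+1) - (θA - θB)) := by
    intro k
    simp only [hM_def]
    rw [Finset.sum_Icc_succ_top (Nat.le_add_left 1 k), Finset.sum_Icc_succ_top (Nat.le_add_left 1 k)]
    ring
  have hΛstep : ∀ k : ℕ, Λ (k+1) = Λ k + c (k+1) * (M (k+1) - M k) := by
    intro k
    rw [hΛ (k+1), hΛ k, Finset.sum_Icc_succ_top (Nat.le_add_left 1 k), hMstep k]
    simp only [hc_def]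
    ring
  -- nonnegativity of c, p
  have hc0 : ∀ k, 1 ≤ k → 0 ≤ c k := by
    intro k hk; simp only [hc_def]
    exact mul_nonneg (hγ0 k hk) (hF0 (k-1))
  have hcsucc : ∀ k : ℕ, c (k+1) = γ (k+1) * f (X k) := by
    intro k; simp only [hc_def, Nat.add_sub_cancel]
  have hp0 : ∀ k, 1 ≤ k → 0 ≤ p k := by
    intro k hk
    obtain ⟨j, rfl⟩ : ∃ j, k = j + 1 := ⟨k - 1, by omega⟩
    simp only [hp_def, Nat.add_sub_cancel]
    have h1 := hgrow j
    have h2 := hγ0 (j+2) (by omega)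
    nlinarith
  have hKey1 : ∀ k, 1 ≤ k → c (k+1) - c k ≤ p k := by
    intro k hk
    obtain ⟨j, rfl⟩ : ∃ j, k = j + 1 := ⟨k - 1, by omega⟩
    simp only [hc_def, hp_def, Nat.add_sub_cancel]
    have h1 := hmono (j+1) (by omega)
    have h2 := hγ0 (j+2) (by omega)
    have h3 := hF0 j
    have h4 := hlt (j+1) (by omega)
    have h5 := hγ0 (j+1) (by omega)
    have key : 0 ≤ γ (j+1) - γ (j+2) * (1 - γ (j+1)) := by nlinarith
    nlinarith [mul_nonneg key h3]
  have habs : ∀ k, 1 ≤ k → |c (k+1) - c k| ≤ 2 * p k - (c (k+1) - c k) := by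
    intro k hk
    have h1 := hKey1 k hk
    have h2 := hp0 k hk
    rw [abs_le]
    constructor <;> linarith
  -- Abel summation (step A)
  have stepA : ∀ N, m ≤ N → |Λ (N+1) - Λ m - c (N+1) * M (N+1) + c (m+1) * M m|
      ≤ ∑ k ∈ Finset.Icc (m+1) N, |c (k+1) - c k| * w k := by
    intro N hN
    induction N, hN using Nat.le_induction with
    | base =>
      rw [Finset.Icc_eq_empty (by omega), Finset.sum_empty]
      have h := hΛstep m
      have he : Λ (m+1) - Λ m - c (m+1) * M (m+1) + c (m+1) * M m = 0 := by
        rw [h]; ring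
      rw [he, abs_zero]
    | succ N hmN ih =>
      have he : Λ (N+1+1) - Λ m - c (N+1+1) * M (N+1+1) + c (m+1) * M m
          = (Λ (N+1) - Λ m - c (N+1) * M (N+1) + c (m+1) * M m)
            + (c (N+1) - c (N+1+1)) * M (N+1) := by
        rw [hΛstep (N+1)]; ring
      rw [Finset.sum_Icc_succ_top (show m+1 ≤ N+1 by omega), he]
      have hb : |(c (N+1) - c (N+1+1)) * M (N+1)| ≤ |c (N+1+1) - c (N+1)| * w (N+1) := by
        rw [abs_mul, abs_sub_comm]
        exact mul_le_mul_of_nonneg_left (hMw (N+1) (by omega)) (abs_nonneg _)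
      calc |(Λ (N+1) - Λ m - c (N+1) * M (N+1) + c (m+1) * M m)
            + (c (N+1) - c (N+1+1)) * M (N+1)|
          ≤ |Λ (N+1) - Λ m - c (N+1) * M (N+1) + c (m+1) * M m|
            + |(c (N+1) - c (N+1+1)) * M (N+1)| := abs_add_le _ _
        _ ≤ (∑ k ∈ Finset.Icc (m+1) N, |c (k+1) - c k| * w k)
            + |c (N+1+1) - c (N+1)| * w (N+1) := by linarith
  -- termwise bound, then two more Abel-type inductions
  have hsum1 : ∀ N, (∑ k ∈ Finset.Icc (m+1) N, |c (k+1) - c k| * w k)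
      ≤ (∑ k ∈ Finset.Icc (m+1) N, 2 * p k * w k)
        + ∑ k ∈ Finset.Icc (m+1) N, (c k - c (k+1)) * w k := by
    intro N
    rw [← Finset.sum_add_distrib]
    apply Finset.sum_le_sum
    intro k hkmem
    have hk1 : 1 ≤ k := by have := (Finset.mem_Icc.1 hkmem).1; omega
    have hkm : m ≤ k := by have := (Finset.mem_Icc.1 hkmem).1; omega
    have h1 := habs k hk1
    have hwk := hw0 k hkm
    have h2 : (2 * p k - (c (k+1) - c k)) * w k = 2 * p k * w k + (c k - c (k+1)) * w k := by ring
    have h3 := mul_le_mul_of_nonneg_right h1 hwk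
    linarith
  have stepB : ∀ N, m ≤ N → (∑ k ∈ Finset.Icc (m+1) N, 2 * p k * w k)
      ≤ (D - s N) * f (X N) - (D - s m) * f (X m)
        + ∑ k ∈ Finset.Icc (m+1) N, c k * (D - s k) := by
    intro N hN
    induction N, hN using Nat.le_induction with
    | base =>
      rw [Finset.Icc_eq_empty (by omega), Finset.sum_empty, Finset.sum_empty]
      linarith
    | succ N hmN ih =>
      rw [Finset.sum_Icc_succ_top (show m+1 ≤ N+1 by omega),
        Finset.sum_Icc_succ_top (show m+1 ≤ N+1 by omega)]
      have hG : 0 ≤ f (X (N+1)) - (1 - γ (N+1)) * f (X N) := by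
        have := hgrow N; linarith
      have hγw : 2 * γ (N+1+1) * w (N+1) ≤ D - s (N+1) := by
        have hmono2 : γ (N+1+1) ≤ γ (N+1) := hmono (N+1) (by omega)
        have h6 := hsu (N+1) (by omega)
        have h7 := hw0 (N+1) (by omega)
        nlinarith
      have h1 : 2 * p (N+1) * w (N+1)
          ≤ (f (X (N+1)) - (1 - γ (N+1)) * f (X N)) * (D - s (N+1)) := by
        have hp' : p (N+1) = γ (N+1+1) * (f (X (N+1)) - (1 - γ (N+1)) * f (X N)) := by
          simp only [hp_def, Nat.add_sub_cancel]
        rw [hp']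
        nlinarith [hγw, hG, hw0 (N+1) (show m ≤ N+1 by omega),
          mul_nonneg (hγ0 (N+1+1) (by omega)) (hw0 (N+1) (show m ≤ N+1 by omega))]
      have h2 : (D - s N) * f (X N) + (f (X (N+1)) - (1 - γ (N+1)) * f (X N)) * (D - s (N+1))
          ≤ (D - s (N+1)) * f (X (N+1)) + γ (N+1) * f (X N) * (D - s (N+1)) := by
        have h3 := hsmono N hmN
        have h4 := hF0 N
        nlinarith [mul_nonneg h4 (show (0:ℝ) ≤ s N - s (N+1) by linarith)]
      have hc'' : c (N+1) * (D - s (N+1)) = γ (N+1) * f (X N) * (D - s (N+1)) := by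
        rw [hcsucc N]
      linarith [ih, h1, h2, hc'']
  have stepC : ∀ N, m ≤ N → (∑ k ∈ Finset.Icc (m+1) N, (c k - c (k+1)) * w k)
      ≤ c (m+1) * w m - c (N+1) * w N + ∑ k ∈ Finset.Icc (m+1) N, c k * s k := by
    intro N hN
    induction N, hN using Nat.le_induction with
    | base =>
      rw [Finset.Icc_eq_empty (by omega), Finset.sum_empty, Finset.sum_empty]
      linarith
    | succ N hmN ih =>
      rw [Finset.sum_Icc_succ_top (show m+1 ≤ N+1 by omega),
        Finset.sum_Icc_succ_top (show m+1 ≤ N+1 by omega)]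
      have h1 := hws N hmN
      have h2 := hc0 (N+1) (by omega)
      nlinarith [ih, mul_le_mul_of_nonneg_left h1 h2]
  -- nonnegativity of R' m
  have hR'm0 : 0 ≤ R' m := by
    have h := hR' m m le_rfl
    have hnum : 0 ≤ 2 * (β m * ((φ m - φ (m-1)) + 2 * γ m * φ m)) := by
      have h1 := hφd0 m le_rfl
      have h2 := hφpos m
      have h3 := hβpos m
      have h4 := hγ0 m hm1
      have h5 : 0 ≤ γ m * φ m := mul_nonneg h4 h2
      have h6 : 0 ≤ (φ m - φ (m-1)) + 2 * (γ m * φ m) := by linarith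
      nlinarith [mul_nonneg h3 h6]
    exact le_trans (div_nonneg hnum h1γm.le) h
  have hD0 : 0 ≤ D := by
    simp only [hD_def]; exact mul_nonneg hR'm0 h1γm.le
  -- final assembly
  rcases Nat.eq_or_lt_of_le hmn with heq | hlt'
  · rw [← heq]
    rw [Finset.Icc_eq_empty (by omega), Finset.sum_empty, sub_self, abs_zero]
    have := hF0 m
    nlinarith
  · obtain ⟨N, rfl⟩ : ∃ N, n = N + 1 := ⟨n - 1, by omega⟩
    have hmN : m ≤ N := by omega
    -- triangle inequality decomposition
    have tri : |Λ (N+1) - Λ m|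
        ≤ |Λ (N+1) - Λ m - c (N+1) * M (N+1) + c (m+1) * M m|
          + |c (N+1) * M (N+1)| + |c (m+1) * M m| := by
      have h1 : Λ (N+1) - Λ m
          = (Λ (N+1) - Λ m - c (N+1) * M (N+1) + c (m+1) * M m)
            + c (N+1) * M (N+1) + -(c (m+1) * M m) := by ring
      calc |Λ (N+1) - Λ m|
          = |(Λ (N+1) - Λ m - c (N+1) * M (N+1) + c (m+1) * M m)
            + c (N+1) * M (N+1) + -(c (m+1) * M m)| := by rw [← h1]
        _ ≤ |(Λ (N+1) - Λ m - c (N+1) * M (N+1) + c (m+1) * M m)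
            + c (N+1) * M (N+1)| + |-(c (m+1) * M m)| := abs_add_le _ _
        _ ≤ _ := by
            rw [abs_neg]
            have := abs_add_le (Λ (N+1) - Λ m - c (N+1) * M (N+1) + c (m+1) * M m)
              (c (N+1) * M (N+1))
            linarith
    have hb1 : |c (N+1) * M (N+1)| ≤ c (N+1) * w (N+1) := by
      rw [abs_mul, abs_of_nonneg (hc0 (N+1) (by omega))]
      exact mul_le_mul_of_nonneg_left (hMw (N+1) (by omega)) (hc0 (N+1) (by omega))
    have hb2 : |c (m+1) * M m| ≤ c (m+1) * w m := by
      rw [abs_mul, abs_of_nonneg (hc0 (m+1) (by omega))]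
      exact mul_le_mul_of_nonneg_left (hMw m le_rfl) (hc0 (m+1) (by omega))
    -- combine all the sum bounds
    have hcomb : |Λ (N+1) - Λ m|
        ≤ (D - s N) * f (X N) - (D - s m) * f (X m)
          + (∑ k ∈ Finset.Icc (m+1) N, c k * (D - s k))
          + (∑ k ∈ Finset.Icc (m+1) N, c k * s k)
          + 2 * (c (m+1) * w m) - c (N+1) * w N + c (N+1) * w (N+1) := by
      have t1 := stepA N hmN
      have t2 := hsum1 N
      have t3 := stepB N hmN
      have t4 := stepC N hmN
      linarith
    have hsums : (∑ k ∈ Finset.Icc (m+1) N, c k * (D - s k))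
        + (∑ k ∈ Finset.Icc (m+1) N, c k * s k)
        = (∑ k ∈ Finset.Icc (m+1) N, c k) * D := by
      rw [← Finset.sum_add_distrib, Finset.sum_mul]
      apply Finset.sum_congr rfl
      intro k _
      ring
    -- bound the boundary terms
    have hbd1 : 2 * (c (m+1) * w m) ≤ (D - s m) * f (X m) := by
      have h1 : γ (m+1) ≤ γ m := hmono m hm1
      have h2 := hsu m le_rfl
      have h3 := hw0 m le_rfl
      have h4 := hF0 m
      have h5 : c (m+1) = γ (m+1) * f (X m) := hcsucc m
      rw [h5]
      nlinarith [mul_le_mul_of_nonneg_right (mul_le_mul_of_nonneg_right h1 h3) h4]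
    have hbd2 : c (N+1) * w (N+1) ≤ D / 2 * f (X N) := by
      have h2 := hsu (N+1) (by omega)
      have h3 := hw0 (N+1) (show m ≤ N+1 by omega)
      have h4 := hF0 N
      have h5 : c (N+1) = γ (N+1) * f (X N) := hcsucc N
      have h6 := hs0 (N+1) (show m ≤ N+1 by omega)
      rw [h5]
      nlinarith
    have hbd3 : 0 ≤ c (N+1) * w N := mul_nonneg (hc0 (N+1) (by omega)) (hw0 N hmN)
    have hbd4 : (D - s N) * f (X N) ≤ D * f (X N) := by
      have := hs0 N hmN
      have := hF0 N
      nlinarith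
    -- so far:  |Λ (N+1) - Λ m| ≤ (3/2) D f(X N) + (∑ c) * D
    have hmain : |Λ (N+1) - Λ m|
        ≤ D * f (X N) + D / 2 * f (X N) + (∑ k ∈ Finset.Icc (m+1) N, c k) * D := by
      have := hF0 m
      have hDsm : 0 ≤ D - s m := by
        have h2 := hsu m le_rfl
        have h6 : 0 ≤ 2 * γ m * w m :=
          mul_nonneg (mul_nonneg (by norm_num) (hγ0 m hm1)) (hw0 m le_rfl)
        linarith
      nlinarith [hcomb, hsums, hbd1, hbd2, hbd3, hbd4, mul_nonneg hDsm (hF0 m)]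
    -- convert to the target
    have hSig0 : 0 ≤ ∑ k ∈ Finset.Icc (m+1) N, c k :=
      Finset.sum_nonneg fun k hk => hc0 k (by have := (Finset.mem_Icc.1 hk).1; omega)
    have hfin1 : (∑ k ∈ Finset.Icc (m+1) N, c k) * D
        ≤ R' m * ∑ k ∈ Finset.Icc (m+1) N, c k := by
      have : D ≤ R' m := by
        simp only [hD_def]
        nlinarith [hR'm0, hγ0 m hm1]
      nlinarith [hSig0, hR'm0]
    have hfin2 : D * f (X N) + D / 2 * f (X N) ≤ R' m * (2 * f (X (N+1))) := by
      have hg := hgrow N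
      have hγle : γ (N+1) ≤ γ m := hγanti m (N+1) hm1 (by omega)
      have a0 : (1 - γ m) * f (X N) ≤ (1 - γ (N+1)) * f (X N) := by
        nlinarith [mul_nonneg (hF0 N) (sub_nonneg.2 hγle)]
      have a1 : R' m * ((1 - γ m) * f (X N)) ≤ R' m * f (X (N+1)) := by
        apply mul_le_mul_of_nonneg_left _ hR'm0
        linarith
      have a2 : 0 ≤ R' m * f (X (N+1)) := mul_nonneg hR'm0 (hF0 (N+1))
      have hDexp : D * f (X N) = R' m * ((1 - γ m) * f (X N)) := by
        simp only [hD_def]; ring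
      nlinarith [a1, a2]
    have hsumsucc : (∑ k ∈ Finset.Icc (m+1) (N+1), c k)
        = (∑ k ∈ Finset.Icc (m+1) N, c k) + c (N+1) :=
      Finset.sum_Icc_succ_top (show m+1 ≤ N+1 by omega) c
    have hgoal : (∑ k ∈ Finset.Icc (m+1) (N+1), γ k * f (X (k - 1)))
        = ∑ k ∈ Finset.Icc (m+1) (N+1), c k := by
      simp only [hc_def]
    rw [hgoal, hsumsucc]
    have hcN1 : 0 ≤ c (N+1) := hc0 (N+1) (by omega)
    nlinarith [hmain, hfin1, hfin2, mul_nonneg hR'm0 hcN1]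
end
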